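/- arXiv:1402.6819 — 2 statements merged into one kernel-verified Lean document; each statement's English description precedes it below -/
import Mathlib

section
/- Under Hypothesis A, for every i ∈ {1,…,N−1}: lim_{t↑1} (1 − K_{1i}(t)) / (1−t)^{1/2^i} = D_i. That is, the generating function of the total number of type-(i+1) emigrants ever produced by the subprocess of types 1,…,i satisfies 1 − K_{1i}(t) ∼ D_i (1−t)^{1/2^i} as t ↑ 1. -/
open Filter Topology

noncomputable section

namespace BD

/-- The `j`-th coordinate (natural index) of a multi-index, `0` out of range. -/
def coord {N : ℕ} (k : Fin N → ℕ) (j : ℕ) : ℕ := if h : j < N then k ⟨j, h⟩ else 0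

/-- Offspring probability generating function of (0-based) type `i`:
`h_i(s) = E ∏_j s_j ^ η_{ij}`. -/
def pgf (N : ℕ) (η : ℕ → (Fin N → ℕ) → ℝ) (i : ℕ) (s : Fin N → ℝ) : ℝ :=
  ∑' k : Fin N → ℕ, η i k * ∏ j : Fin N, s j ^ k j

/-- Iterated generating functions: `Hgen N η n s i = H_n^{(i)}(s)`. -/
def Hgen (N : ℕ) (η : ℕ → (Fin N → ℕ) → ℝ) : ℕ → (Fin N → ℝ) → Fin N → ℝ
  | 0, s => s
  | n + 1, s => fun i => pgf N η i.1 (Hgen N η n s)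

/-- `Q_n^{(i)}(s) = 1 - H_n^{(i)}(s)`. -/
def Qfun (N : ℕ) (η : ℕ → (Fin N → ℕ) → ℝ) (n : ℕ) (s : Fin N → ℝ) (i : Fin N) : ℝ :=
  1 - Hgen N η n s i

/-- `Q_n^{(i)} = Q_n^{(i)}(0)`, the survival probability at time `n` started
from one particle of type `i`. -/
def Qsurv (N : ℕ) (η : ℕ → (Fin N → ℕ) → ℝ) (n : ℕ) (i : Fin N) : ℝ :=
  Qfun N η n (fun _ => 0) i

/-- Mean number of type-`j` children of a type-`i` particle. -/
def meanM (N : ℕ) (η : ℕ → (Fin N → ℕ) → ℝ) (i j : ℕ) : ℝ :=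
  ∑' k : Fin N → ℕ, η i k * (coord k j : ℝ)

/-- `b_i = Var(η_{ii}) / 2` (the mean of `η_{ii}` being `1`). -/
def bCoef (N : ℕ) (η : ℕ → (Fin N → ℕ) → ℝ) (i : ℕ) : ℝ :=
  (∑' k : Fin N → ℕ, η i k * ((coord k i : ℝ) - 1) ^ 2) / 2

/-- `m_{i,i+1}` (0-based). -/
def mCoef (N : ℕ) (η : ℕ → (Fin N → ℕ) → ℝ) (i : ℕ) : ℝ := meanM N η i (i + 1)

/-- Hypothesis A for the strongly critical decomposable process, types 0-based:
`η i` is the offspring distribution of type `i`, `0 ≤ i < N`. -/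
structure HypA (N : ℕ) (η : ℕ → (Fin N → ℕ) → ℝ) : Prop where
  nonneg : ∀ i, i < N → ∀ k, 0 ≤ η i k
  total : ∀ i, i < N → HasSum (η i) 1
  decomp : ∀ i, i < N → ∀ k, η i k ≠ 0 → ∀ j : Fin N, (j : ℕ) < i → k j = 0
  critical : ∀ i, i < N → HasSum (fun k : Fin N → ℕ => η i k * (coord k i : ℝ)) 1
  firstMom : ∀ i, i < N → ∀ j : ℕ,
    Summable (fun k : Fin N → ℕ => η i k * (coord k j : ℝ))
  secondMom : ∀ i, i < N → ∀ j l : ℕ,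
    Summable (fun k : Fin N → ℕ => η i k * ((coord k j : ℝ) * (coord k l : ℝ)))
  bPos : ∀ i, i < N → 0 < bCoef N η i
  mPos : ∀ i, i + 1 < N → 0 < mCoef N η i

/-- `γ` for the 0-based type `t`; equals the paper's `γ_i = 2^{-(N-i)}` for `i = t+1`. -/
def gam (N t : ℕ) : ℝ := (1 / 2 : ℝ) ^ (N - 1 - t)

/-- `γ` with the paper's 1-based indexing and `γ_0 = 0`. -/
def gamP (N i : ℕ) : ℝ := if i = 0 then 0 else (1 / 2 : ℝ) ^ (N - i)

/-- `c_{j,i}` built from abstract coefficients: `cAux b m t r = c_{t-r,t}` (0-based),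
`c_{tt} = 1/b_t`, `c_{st} = sqrt(m_s c_{s+1,t} / b_s)`. -/
def cAux (b m : ℕ → ℝ) (t : ℕ) : ℕ → ℝ
  | 0 => 1 / b t
  | r + 1 => Real.sqrt (m (t - (r + 1)) * cAux b m t r / b (t - (r + 1)))

/-- `d_{j,i}` built from abstract coefficients: `dAux b m t r = d_{t-r,t}` (0-based),
`d_{tt} = sqrt(m_t / b_t)`, `d_{st} = sqrt(m_s d_{s+1,t} / b_s)`. -/
def dAux (b m : ℕ → ℝ) (t : ℕ) : ℕ → ℝ
  | 0 => Real.sqrt (m t / b t)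
  | r + 1 => Real.sqrt (m (t - (r + 1)) * dAux b m t r / b (t - (r + 1)))

/-- Closed form of `c_{iN}` of the paper, with 0-based `t = i - 1`. -/
def cConst (N : ℕ) (η : ℕ → (Fin N → ℕ) → ℝ) (t : ℕ) : ℝ :=
  (1 / bCoef N η (N - 1)) ^ ((1 / 2 : ℝ) ^ (N - 1 - t)) *
    ∏ u ∈ Finset.Ico t (N - 1),
      (mCoef N η u / bCoef N η u) ^ ((1 / 2 : ℝ) ^ (u - t + 1))

/-- `D_i` of the paper, with 0-based `t = i - 1`. -/
def DConst (N : ℕ) (η : ℕ → (Fin N → ℕ) → ℝ) (t : ℕ) : ℝ :=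
  dAux (bCoef N η) (mCoef N η) t t

/-- The vector `s'` with `s'_j = 1 - (1 - s_j) Q_{n-m}^{(j)}`. -/
def sPrime (N : ℕ) (η : ℕ → (Fin N → ℕ) → ℝ) (m n : ℕ) (s : Fin N → ℝ) : Fin N → ℝ :=
  fun j => 1 - (1 - s j) * Qsurv N η (n - m) j

/-- Conditional generating function of the reduced process:
`J_{m,n}^{(i)}(s) = 1 - Q_m^{(i)}(s') / Q_n^{(i)}`. -/
def Jred (N : ℕ) (η : ℕ → (Fin N → ℕ) → ℝ) (m n : ℕ) (s : Fin N → ℝ) (i : Fin N) : ℝ :=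
  1 - Qfun N η m (sPrime N η m n s) i / Qsurv N η n i

/-- Joint conditional generating function of the reduced process along
a list of (absolute) observation times with marks, relative to the previous
time `prev`; the paper's `Ĵ` is `Jhat N η n 0 [(m₁,S₁),…,(m_p,S_p)]` at coordinate `0`. -/
def Jhat (N : ℕ) (η : ℕ → (Fin N → ℕ) → ℝ) (n : ℕ) : ℕ → List (ℕ × (Fin N → ℝ)) → Fin N → ℝ
  | _, [] => fun _ => 1
  | prev, (m, S) :: rest =>
      Jred N η (m - prev) (n - prev) (fun j => S j * Jhat N η n m rest j)

/-- `φ_i(y; u, v)` of the paper, with `a = b_i c_{iN}`. -/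
def phiLim (a y u v : ℝ) : ℝ :=
  if v = 1 then (1 - u) / (a * y * (1 - u) + 1)
  else
    Real.sqrt (1 - v) *
        ((1 - u) + Real.sqrt (1 - v) * Real.tanh (a * y * Real.sqrt (1 - v))) /
      ((1 - u) * Real.tanh (a * y * Real.sqrt (1 - v)) + Real.sqrt (1 - v))

/-- `Ψ_i(y; λ, μ)` with `b = b_i`, `m = m_{i,i+1}`. -/
def PsiLim (b m y lam mu : ℝ) : ℝ :=
  Real.sqrt (m * mu / b) *
      (b * lam + Real.sqrt (b * m * mu) * Real.tanh (y * Real.sqrt (b * m * mu))) /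
    (b * lam * Real.tanh (y * Real.sqrt (b * m * mu)) + Real.sqrt (b * m * mu))

/-- `ψ(x; s) = (1-s)/(x(1-s) + 1 - x)`. -/
def psiLim (x s : ℝ) : ℝ := (1 - s) / (x * (1 - s) + 1 - x)

/-- Product of the third components of a list of triples. -/
def vprod : List (ℝ × ℝ × ℝ) → ℝ
  | [] => 1
  | (_, _, v) :: rest => v * vprod rest

/-- The iterated `X_i^{(p)}` along a list of `(y, u, v)` triples; `a = b_i c_{iN}`:
`X^{(p)}((y,u,v)::rest) = X(y; u ⬝ X^{(p-1)}(rest), v ⬝ ∏ v')` where `X = 1 - φ`. -/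
def Xiter (a : ℝ) : List (ℝ × ℝ × ℝ) → ℝ
  | [] => 1
  | (y, u, v) :: rest => 1 - phiLim a y (u * Xiter a rest) (v * vprod rest)

/-- `G(x; s) = 1 - ψ(x; s)`. -/
def Gfun (x s : ℝ) : ℝ := 1 - psiLim x s

/-- Iterated `G^{(p)}` along a list of `(x, s)` pairs, with the rescaling
`x ↦ x/(1-x₁)` of the later increments. -/
def Giter : List (ℝ × ℝ) → ℝ
  | [] => 1
  | (x, s) :: rest => Gfun x (s * Giter (rest.map fun q => (q.1 / (1 - x), q.2)))
termination_by l => l.length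
decreasing_by simp [List.length_map]

/-- `s_k(n) = exp(-λ_k n^{-γ_k})`. -/
def sVec (N : ℕ) (lam : Fin N → ℝ) (n : ℕ) : Fin N → ℝ :=
  fun k => Real.exp (-(lam k) * (n : ℝ) ^ (-(gam N k.1)))


/-- `Kfix N η τ t r = K_{τ-r,τ}(t)` (0-based): the minimal fixed point in `[0,1]` of
`K = h_{τ-r}(v)` with `v_{τ-r} = K`, `v_q = K_{q,τ}(t)` for `τ-r < q ≤ τ`,
`v_{τ+1} = t`, and `v_j = 1` otherwise. -/
def Kfix (N : ℕ) (η : ℕ → (Fin N → ℕ) → ℝ) (τ : ℕ) (t : ℝ) : ℕ → ℝ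
  | r =>
    sInf {K : ℝ | K ∈ Set.Icc (0 : ℝ) 1 ∧
      K = pgf N η (τ - r)
        (fun j : Fin N =>
          if (j : ℕ) = τ - r then K
          else if h : τ - r < (j : ℕ) ∧ (j : ℕ) ≤ τ then Kfix N η τ t (τ - (j : ℕ))
          else if (j : ℕ) = τ + 1 then t else 1)}
termination_by r => r
decreasing_by omega



/-- `phiP n K = ∑_{j<n} ∑_{l<j} K^l`, so that `K^n - 1 + n(1-K) = (1-K)^2 φ`. -/
def phiP (n : ℕ) (K : ℝ) : ℝ := ∑ j ∈ Finset.range n, ∑ l ∈ Finset.range j, K ^ l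

lemma phiP_id (n : ℕ) (K : ℝ) :
    K ^ n - 1 + n * (1 - K) = (1 - K) ^ 2 * phiP n K := by
  induction n with
  | zero => simp [phiP]
  | succ n ih =>
    have hg := geom_sum_mul K n
    have h : phiP (n+1) K = phiP n K + ∑ l ∈ Finset.range n, K ^ l := by
      simp [phiP, Finset.sum_range_succ]
    rw [h]
    push_cast
    linear_combination ih + (1 - K) * hg

lemma sum_range_cast (n : ℕ) : (∑ j ∈ Finset.range n, (j : ℝ)) = n * (n - 1) / 2 := by
  rcases Nat.eq_zero_or_pos n with h | h
  · subst h; simp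
  · have h2 := Finset.sum_range_id_mul_two n
    have h3 : ((∑ j ∈ Finset.range n, j : ℕ) : ℝ) * 2 = ((n * (n - 1) : ℕ) : ℝ) := by
      rw [← Nat.cast_ofNat, ← Nat.cast_mul, h2]
    rw [Nat.cast_mul, Nat.cast_sub (by omega : 1 ≤ n)] at h3
    push_cast at h3 ⊢
    linarith

lemma phiP_nonneg {n : ℕ} {K : ℝ} (hK : 0 ≤ K) : 0 ≤ phiP n K := by
  apply Finset.sum_nonneg; intro j _
  apply Finset.sum_nonneg; intro l _
  positivity

lemma phiP_le {n : ℕ} {K : ℝ} (hK : 0 ≤ K) (hK1 : K ≤ 1) :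
    phiP n K ≤ n * (n - 1) / 2 := by
  calc phiP n K ≤ ∑ j ∈ Finset.range n, (j : ℝ) := by
        apply Finset.sum_le_sum; intro j _
        calc ∑ l ∈ Finset.range j, K ^ l ≤ ∑ l ∈ Finset.range j, (1:ℝ) :=
              Finset.sum_le_sum fun l _ => pow_le_one₀ hK hK1
          _ = (j : ℝ) := by simp
    _ = _ := sum_range_cast n

lemma phiP_one (n : ℕ) : phiP n 1 = n * (n - 1) / 2 := by
  have : phiP n 1 = ∑ j ∈ Finset.range n, (j : ℝ) := by
    unfold phiP
    refine Finset.sum_congr rfl fun j _ => by simp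
  rw [this, sum_range_cast]

lemma phiP_ge_one {n : ℕ} (hn : 2 ≤ n) {K : ℝ} (hK : 0 ≤ K) : 1 ≤ phiP n K := by
  have h1 : (∑ l ∈ Finset.range 1, K ^ l) = 1 := by simp
  have := Finset.single_le_sum (f := fun j => ∑ l ∈ Finset.range j, K ^ l)
    (fun j _ => Finset.sum_nonneg fun l _ => by positivity)
    (Finset.mem_range.2 (by omega : 1 < n))
  unfold phiP
  simpa using this

lemma continuous_phiP (n : ℕ) : Continuous (phiP n) := by
  unfold phiP; fun_prop

lemma one_sub_pow_le {n : ℕ} {K : ℝ} (hK : 0 ≤ K) : 1 - K ^ n ≤ n * (1 - K) := by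
  nlinarith [phiP_id n K, phiP_nonneg (n := n) hK]

/-- `e^{-T} ≤ 1 - T + T²/2` for `T ≥ 0`. -/
lemma exp_neg_le_quad {T : ℝ} (hT : 0 ≤ T) : Real.exp (-T) ≤ 1 - T + T ^ 2 / 2 := by
  have hderiv : ∀ y : ℝ, HasDerivAt (fun x : ℝ => 1 - x + x ^ 2 / 2 - Real.exp (-x))
      (-1 + y + Real.exp (-y)) y := by
    intro y
    have h1 : HasDerivAt (fun x : ℝ => Real.exp (-x)) (-Real.exp (-y)) y := by
      simpa [Function.comp_def] using (Real.hasDerivAt_exp (-y)).comp y (hasDerivAt_neg y)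
    have h2 : HasDerivAt (fun x : ℝ => 1 - x + x ^ 2 / 2) (-1 + y) y := by
      have h3 := ((hasDerivAt_const y (1:ℝ)).sub (hasDerivAt_id y)).add
        ((hasDerivAt_pow 2 y).div_const 2)
      refine h3.congr_deriv ?_
      push_cast; ring
    exact (h2.sub h1).congr_deriv (by ring)
  have hmono : MonotoneOn (fun x : ℝ => 1 - x + x ^ 2 / 2 - Real.exp (-x)) (Set.Ici 0) := by
    apply monotoneOn_of_deriv_nonneg (convex_Ici 0)
    · exact (by continuity : Continuous fun x : ℝ => 1 - x + x ^ 2 / 2 - Real.exp (-x)).continuousOn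
    · intro y hy
      exact (hderiv y).differentiableAt.differentiableWithinAt
    · intro y hy
      rw [(hderiv y).deriv]
      have := Real.add_one_le_exp (-y)
      simp only [interior_Ici, Set.mem_Ioi] at hy
      linarith
  have h0 := hmono Set.self_mem_Ici (Set.mem_Ici.2 hT) hT
  have hz : (1:ℝ) - 0 + 0 ^ 2 / 2 - Real.exp (-0) = 0 := by simp
  simp only [] at h0
  rw [hz] at h0
  linarith

/-! ### pgf machinery -/

def Pv {N : ℕ} (v : Fin N → ℝ) (k : Fin N → ℕ) : ℝ := ∏ j, v j ^ k j

def Tv {N : ℕ} (v : Fin N → ℝ) (k : Fin N → ℕ) : ℝ := ∑ j, (k j : ℝ) * (1 - v j)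

/-- Second moment matrix. -/
def M2 (N : ℕ) (η : ℕ → (Fin N → ℕ) → ℝ) (i j l : ℕ) : ℝ :=
  ∑' k : Fin N → ℕ, η i k * ((coord k j : ℝ) * (coord k l : ℝ))

lemma coord_fin {N : ℕ} (k : Fin N → ℕ) (j : Fin N) : coord k (j : ℕ) = k j := by
  simp [coord]

section PGF

variable {N : ℕ} {η : ℕ → (Fin N → ℕ) → ℝ} (hA : HypA N η) {i : ℕ} (hi : i < N)
variable {v : Fin N → ℝ}

lemma Pv_nonneg (hv0 : ∀ j, 0 ≤ v j) (k : Fin N → ℕ) : 0 ≤ Pv v k :=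
  Finset.prod_nonneg fun j _ => pow_nonneg (hv0 j) _

lemma Pv_le_one (hv0 : ∀ j, 0 ≤ v j) (hv1 : ∀ j, v j ≤ 1) (k : Fin N → ℕ) : Pv v k ≤ 1 :=
  Finset.prod_le_one (fun j _ => pow_nonneg (hv0 j) _)
    (fun j _ => pow_le_one₀ (hv0 j) (hv1 j))

include hA hi in
lemma summable_eta : Summable (η i) := (hA.total i hi).summable

include hA hi in
lemma summable_mul_Pv (hv0 : ∀ j, 0 ≤ v j) (hv1 : ∀ j, v j ≤ 1) :
    Summable (fun k : Fin N → ℕ => η i k * Pv v k) := by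
  apply Summable.of_nonneg_of_le
    (fun k => mul_nonneg (hA.nonneg i hi k) (Pv_nonneg hv0 k))
    (fun k => mul_le_of_le_one_right (hA.nonneg i hi k) (Pv_le_one hv0 hv1 k))
    (summable_eta hA hi)

lemma pgf_eq_tsum_Pv (v : Fin N → ℝ) : pgf N η i v = ∑' k : Fin N → ℕ, η i k * Pv v k := rfl

include hA hi in
lemma pgf_le_one (hv0 : ∀ j, 0 ≤ v j) (hv1 : ∀ j, v j ≤ 1) : pgf N η i v ≤ 1 := by
  rw [pgf_eq_tsum_Pv, ← (hA.total i hi).tsum_eq]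
  exact Summable.tsum_le_tsum
    (fun k => mul_le_of_le_one_right (hA.nonneg i hi k) (Pv_le_one hv0 hv1 k))
    (summable_mul_Pv hA hi hv0 hv1) (summable_eta hA hi)

include hA hi in
lemma pgf_nonneg (hv0 : ∀ j, 0 ≤ v j) : 0 ≤ pgf N η i v :=
  tsum_nonneg fun k => mul_nonneg (hA.nonneg i hi k) (Pv_nonneg hv0 k)

include hA hi in
lemma one_sub_pgf (hv0 : ∀ j, 0 ≤ v j) (hv1 : ∀ j, v j ≤ 1) :
    1 - pgf N η i v = ∑' k : Fin N → ℕ, η i k * (1 - Pv v k) := by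
  have h1 : (fun k : Fin N → ℕ => η i k * (1 - Pv v k))
      = fun k => η i k - η i k * Pv v k := by
    funext k; ring
  rw [h1, Summable.tsum_sub (summable_eta hA hi) (summable_mul_Pv hA hi hv0 hv1),
    (hA.total i hi).tsum_eq, pgf_eq_tsum_Pv]

lemma one_sub_Pv_le_Tv (hv0 : ∀ j, 0 ≤ v j) (hv1 : ∀ j, v j ≤ 1) (k : Fin N → ℕ) :
    1 - Pv v k ≤ Tv v k := by
  classical
  unfold Pv Tv
  induction (Finset.univ : Finset (Fin N)) using Finset.induction_on with
  | empty => simp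
  | @insert j s hj ih =>
    rw [Finset.prod_insert hj, Finset.sum_insert hj]
    have h1 : 1 - v j ^ k j ≤ (k j : ℝ) * (1 - v j) := one_sub_pow_le (hv0 j)
    have h2 : 0 ≤ v j ^ k j := pow_nonneg (hv0 j) _
    have h3 : v j ^ k j ≤ 1 := pow_le_one₀ (hv0 j) (hv1 j)
    have h4 : 0 ≤ ∏ x ∈ s, v x ^ k x := Finset.prod_nonneg fun x _ => pow_nonneg (hv0 x) _
    have h5 : ∏ x ∈ s, v x ^ k x ≤ 1 :=
      Finset.prod_le_one (fun x _ => pow_nonneg (hv0 x) _)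
        (fun x _ => pow_le_one₀ (hv0 x) (hv1 x))
    nlinarith [ih]

include hA hi in
lemma summable_coord_mul (j : Fin N) (c : ℝ) :
    Summable (fun k : Fin N → ℕ => η i k * ((k j : ℝ) * c)) := by
  have := (hA.firstMom i hi (j : ℕ)).mul_right c
  simpa [coord_fin, mul_assoc] using this

include hA hi in
lemma summable_mul_Tv : Summable (fun k : Fin N → ℕ => η i k * Tv v k) := by
  have h : (fun k : Fin N → ℕ => η i k * Tv v k)
      = fun k => ∑ j : Fin N, η i k * ((k j : ℝ) * (1 - v j)) := by
    funext k; unfold Tv; rw [Finset.mul_sum]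
  rw [h]
  exact summable_sum fun j _ => summable_coord_mul hA hi j (1 - v j)

include hA hi in
lemma tsum_mul_Tv :
    ∑' k : Fin N → ℕ, η i k * Tv v k = ∑ j : Fin N, (1 - v j) * meanM N η i (j : ℕ) := by
  have h : (fun k : Fin N → ℕ => η i k * Tv v k)
      = fun k => ∑ j : Fin N, η i k * ((k j : ℝ) * (1 - v j)) := by
    funext k; unfold Tv; rw [Finset.mul_sum]
  rw [h, Summable.tsum_finsetSum (fun j _ => summable_coord_mul hA hi j (1 - v j))]
  refine Finset.sum_congr rfl fun j _ => ?_
  have h2 : (fun k : Fin N → ℕ => η i k * ((k j : ℝ) * (1 - v j)))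
      = fun k => (η i k * (coord k (j : ℕ) : ℝ)) * (1 - v j) := by
    funext k; rw [coord_fin]; ring
  rw [h2, tsum_mul_right, meanM, mul_comm]

include hA hi in
lemma one_sub_pgf_le (hv0 : ∀ j, 0 ≤ v j) (hv1 : ∀ j, v j ≤ 1) :
    1 - pgf N η i v ≤ ∑ j : Fin N, (1 - v j) * meanM N η i (j : ℕ) := by
  rw [one_sub_pgf hA hi hv0 hv1, ← tsum_mul_Tv hA hi]
  exact Summable.tsum_le_tsum
    (fun k => mul_le_mul_of_nonneg_left (one_sub_Pv_le_Tv hv0 hv1 k) (hA.nonneg i hi k))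
    (by
      apply Summable.of_nonneg_of_le
        (fun k => mul_nonneg (hA.nonneg i hi k) (by
          have := Pv_le_one hv0 hv1 k; linarith))
        (fun k => mul_le_of_le_one_right (hA.nonneg i hi k) (by
          have := Pv_nonneg hv0 k; linarith))
        (summable_eta hA hi))
    (summable_mul_Tv hA hi)

lemma Tv_nonneg (hv1 : ∀ j, v j ≤ 1) (k : Fin N → ℕ) : 0 ≤ Tv v k :=
  Finset.sum_nonneg fun j _ => mul_nonneg (Nat.cast_nonneg _) (by linarith [hv1 j])

lemma Pv_le_exp (hv0 : ∀ j, 0 ≤ v j) (k : Fin N → ℕ) :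
    Pv v k ≤ Real.exp (-Tv v k) := by
  unfold Pv Tv
  rw [← Finset.sum_neg_distrib, Real.exp_sum]
  apply Finset.prod_le_prod (fun j _ => pow_nonneg (hv0 j) _)
  intro j _
  have h1 : v j ≤ Real.exp (v j - 1) := by
    have := Real.add_one_le_exp (v j - 1); linarith
  calc v j ^ k j ≤ Real.exp (v j - 1) ^ k j := pow_le_pow_left₀ (hv0 j) h1 _
    _ = Real.exp (-(( k j : ℝ) * (1 - v j))) := by
        rw [← Real.exp_nat_mul]; ring_nf

lemma one_sub_Pv_ge (hv0 : ∀ j, 0 ≤ v j) (hv1 : ∀ j, v j ≤ 1) (k : Fin N → ℕ) :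
    Tv v k - Tv v k ^ 2 / 2 ≤ 1 - Pv v k := by
  have h1 := Pv_le_exp (v := v) hv0 k
  have h2 := exp_neg_le_quad (Tv_nonneg hv1 k)
  linarith

include hA hi in
lemma summable_coord2_mul (j l : Fin N) (c : ℝ) :
    Summable (fun k : Fin N → ℕ => η i k * ((k j : ℝ) * (k l : ℝ) * c)) := by
  have := (hA.secondMom i hi (j : ℕ) (l : ℕ)).mul_right c
  simpa [coord_fin, mul_assoc] using this

include hA hi in
lemma summable_mul_Tv_sq : Summable (fun k : Fin N → ℕ => η i k * Tv v k ^ 2) := by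
  have h : (fun k : Fin N → ℕ => η i k * Tv v k ^ 2)
      = fun k => ∑ j : Fin N, ∑ l : Fin N,
          η i k * ((k j : ℝ) * (k l : ℝ) * ((1 - v j) * (1 - v l))) := by
    funext k
    unfold Tv
    rw [sq, Finset.sum_mul_sum, Finset.mul_sum]
    refine Finset.sum_congr rfl fun j _ => ?_
    rw [Finset.mul_sum]
    refine Finset.sum_congr rfl fun l _ => by ring
  rw [h]
  refine summable_sum fun j _ => ?_
  refine summable_sum fun l _ => summable_coord2_mul hA hi j l _

include hA hi in
lemma tsum_mul_Tv_sq :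
    ∑' k : Fin N → ℕ, η i k * Tv v k ^ 2
      = ∑ j : Fin N, ∑ l : Fin N, (1 - v j) * (1 - v l) * M2 N η i (j : ℕ) (l : ℕ) := by
  have h : (fun k : Fin N → ℕ => η i k * Tv v k ^ 2)
      = fun k => ∑ j : Fin N, ∑ l : Fin N,
          η i k * ((k j : ℝ) * (k l : ℝ) * ((1 - v j) * (1 - v l))) := by
    funext k
    unfold Tv
    rw [sq, Finset.sum_mul_sum, Finset.mul_sum]
    refine Finset.sum_congr rfl fun j _ => ?_
    rw [Finset.mul_sum]
    refine Finset.sum_congr rfl fun l _ => by ring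
  rw [h, Summable.tsum_finsetSum (fun j _ => summable_sum fun l _ => summable_coord2_mul hA hi j l _)]
  refine Finset.sum_congr rfl fun j _ => ?_
  rw [Summable.tsum_finsetSum (fun l _ => summable_coord2_mul hA hi j l _)]
  refine Finset.sum_congr rfl fun l _ => ?_
  have h2 : (fun k : Fin N → ℕ => η i k * ((k j : ℝ) * (k l : ℝ) * ((1 - v j) * (1 - v l))))
      = fun k => (η i k * ((coord k (j : ℕ) : ℝ) * (coord k (l : ℕ) : ℝ)))
          * ((1 - v j) * (1 - v l)) := by
    funext k; rw [coord_fin, coord_fin]; ring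
  rw [h2, tsum_mul_right, M2, mul_comm]

include hA hi in
lemma one_sub_pgf_ge (hv0 : ∀ j, 0 ≤ v j) (hv1 : ∀ j, v j ≤ 1) :
    (∑ j : Fin N, (1 - v j) * meanM N η i (j : ℕ))
      - (∑ j : Fin N, ∑ l : Fin N, (1 - v j) * (1 - v l) * M2 N η i (j : ℕ) (l : ℕ)) / 2
      ≤ 1 - pgf N η i v := by
  rw [one_sub_pgf hA hi hv0 hv1, ← tsum_mul_Tv hA hi, ← tsum_mul_Tv_sq hA hi]
  have hsub : Summable (fun k : Fin N → ℕ => η i k * Tv v k - η i k * Tv v k ^ 2 / 2) := by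
    apply Summable.sub (summable_mul_Tv hA hi)
    simpa [div_eq_mul_inv, mul_assoc] using (summable_mul_Tv_sq hA (v := v) hi).mul_right (2⁻¹)
  have key : ∑' k : Fin N → ℕ, (η i k * Tv v k - η i k * Tv v k ^ 2 / 2)
      ≤ ∑' k : Fin N → ℕ, η i k * (1 - Pv v k) := by
    apply Summable.tsum_le_tsum _ hsub
    · apply Summable.of_nonneg_of_le
        (fun k => mul_nonneg (hA.nonneg i hi k) (by
          have := Pv_le_one hv0 hv1 k; linarith))
        (fun k => mul_le_of_le_one_right (hA.nonneg i hi k) (by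
          have := Pv_nonneg hv0 k; linarith))
        (summable_eta hA hi)
    · intro k
      have := one_sub_Pv_ge (v := v) hv0 hv1 k
      have hnn := hA.nonneg i hi k
      nlinarith
  rw [Summable.tsum_sub (summable_mul_Tv hA hi)
    (by simpa [div_eq_mul_inv, mul_assoc] using
      (summable_mul_Tv_sq hA (v := v) hi).mul_right (2⁻¹))] at key
  have h3 : ∑' k : Fin N → ℕ, η i k * Tv v k ^ 2 / 2
      = (∑' k : Fin N → ℕ, η i k * Tv v k ^ 2) / 2 := by
    rw [div_eq_mul_inv, ← tsum_mul_right]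
    refine tsum_congr fun k => by ring
  rw [h3] at key
  linarith

end PGF



/-! ### The function `ρ` and fixed-point machinery -/

def rhoF (N : ℕ) (η : ℕ → (Fin N → ℕ) → ℝ) (i : ℕ) (q : Fin N) (K : ℝ) : ℝ :=
  ∑' k : Fin N → ℕ, η i k * phiP (k q) K

section RHO

variable {N : ℕ} {η : ℕ → (Fin N → ℕ) → ℝ} (hA : HypA N η) {i : ℕ} (hi : i < N)
variable {q : Fin N} (hqi : (q : ℕ) = i)

include hA hi in
lemma summable_kq : Summable (fun k : Fin N → ℕ => η i k * (k q : ℝ)) := by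
  have := hA.firstMom i hi (q : ℕ)
  simpa [coord_fin] using this

include hA hi in
lemma summable_kq_sq : Summable (fun k : Fin N → ℕ => η i k * ((k q : ℝ) * (k q : ℝ))) := by
  have := hA.secondMom i hi (q : ℕ) (q : ℕ)
  simpa [coord_fin] using this

include hA hi hqi in
lemma crit_tsum : ∑' k : Fin N → ℕ, η i k * (k q : ℝ) = 1 := by
  have := (hA.critical i hi).tsum_eq
  rw [← this]
  refine tsum_congr fun k => ?_
  rw [← hqi, coord_fin]

include hA hi in
lemma summable_phiP {K : ℝ} (hK : K ∈ Set.Icc (0:ℝ) 1) :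
    Summable (fun k : Fin N → ℕ => η i k * phiP (k q) K) := by
  apply Summable.of_nonneg_of_le
    (fun k => mul_nonneg (hA.nonneg i hi k) (phiP_nonneg hK.1))
    (fun k => ?_) (summable_kq_sq hA hi (q := q))
  have h1 : phiP (k q) K ≤ (k q : ℝ) * ((k q : ℝ) - 1) / 2 := phiP_le hK.1 hK.2
  have h2 : (k q : ℝ) * ((k q : ℝ) - 1) / 2 ≤ (k q : ℝ) * (k q : ℝ) := by
    have : (0:ℝ) ≤ (k q : ℝ) := Nat.cast_nonneg _
    nlinarith
  exact mul_le_mul_of_nonneg_left (h1.trans h2) (hA.nonneg i hi k)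

include hA hi in
lemma summable_km1_sq : Summable (fun k : Fin N → ℕ => η i k * ((k q : ℝ) - 1) ^ 2) := by
  have h : (fun k : Fin N → ℕ => η i k * ((k q : ℝ) - 1) ^ 2)
      = fun k => (η i k * ((k q : ℝ) * (k q : ℝ)) - η i k * (k q : ℝ) * 2) + η i k := by
    funext k; ring
  rw [h]
  exact (((summable_kq_sq hA hi).sub ((summable_kq hA hi).mul_right 2)).add
    (summable_eta hA hi))

include hA hi hqi in
lemma tsum_halfsq :
    ∑' k : Fin N → ℕ, η i k * ((k q : ℝ) * ((k q : ℝ) - 1) / 2) = bCoef N η i := by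
  have h : (fun k : Fin N → ℕ => η i k * ((k q : ℝ) * ((k q : ℝ) - 1) / 2))
      = fun k => (η i k * ((k q : ℝ) - 1) ^ 2) * (1/2)
          + ((η i k * (k q : ℝ) - η i k) * (1/2)) := by
    funext k; ring
  rw [h, Summable.tsum_add (((summable_km1_sq hA hi)).mul_right _)
    ((((summable_kq hA hi).sub (summable_eta hA hi))).mul_right _),
    tsum_mul_right, tsum_mul_right,
    Summable.tsum_sub (summable_kq hA hi) (summable_eta hA hi),
    crit_tsum hA hi hqi, (hA.total i hi).tsum_eq]
  have hb : bCoef N η i = (∑' k : Fin N → ℕ, η i k * ((k q : ℝ) - 1) ^ 2) / 2 := by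
    rw [bCoef]
    congr 1
    refine tsum_congr fun k => ?_
    rw [← hqi, coord_fin]
  rw [hb]
  ring

include hA hi hqi in
lemma rhoF_le_b {K : ℝ} (hK : K ∈ Set.Icc (0:ℝ) 1) : rhoF N η i q K ≤ bCoef N η i := by
  rw [rhoF, ← tsum_halfsq hA hi hqi]
  exact Summable.tsum_le_tsum
    (fun k => mul_le_mul_of_nonneg_left (phiP_le hK.1 hK.2) (hA.nonneg i hi k))
    (summable_phiP hA hi hK)
    (by
      apply Summable.of_nonneg_of_le (fun k => ?_) (fun k => ?_) (summable_kq_sq hA hi (q := q))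
      · have : (0:ℝ) ≤ (k q : ℝ) * ((k q : ℝ) - 1) / 2 := by
          rcases Nat.eq_zero_or_pos (k q) with h | h
          · simp [h]
          · have : (1:ℝ) ≤ (k q : ℝ) := by exact_mod_cast h
            nlinarith
        exact mul_nonneg (hA.nonneg i hi k) this
      · refine mul_le_mul_of_nonneg_left ?_ (hA.nonneg i hi k)
        have : (0:ℝ) ≤ (k q : ℝ) := Nat.cast_nonneg _
        nlinarith)

include hA hi hqi in
lemma rhoF_one : rhoF N η i q 1 = bCoef N η i := by
  rw [rhoF, ← tsum_halfsq hA hi hqi]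
  exact tsum_congr fun k => by rw [phiP_one]

include hA hi hqi in
lemma exists_kstar : ∃ k : Fin N → ℕ, 0 < η i k ∧ 2 ≤ k q := by
  by_contra hcon
  push_neg at hcon
  have hterm : ∀ k : Fin N → ℕ, η i k * ((k q : ℝ) - 1) ^ 2 = η i k - η i k * (k q : ℝ) := by
    intro k
    rcases eq_or_ne (η i k) 0 with h | h
    · rw [h]; ring
    · have hk := hcon k (lt_of_le_of_ne (hA.nonneg i hi k) (Ne.symm h))
      interval_cases h' : (k q)
      · simp
      · simp
  have h0 : ∑' k : Fin N → ℕ, η i k * ((k q : ℝ) - 1) ^ 2 = 0 := by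
    rw [tsum_congr hterm, Summable.tsum_sub (summable_eta hA hi) (summable_kq hA hi),
      (hA.total i hi).tsum_eq, crit_tsum hA hi hqi]
    ring
  have hb := hA.bPos i hi
  rw [bCoef] at hb
  have : (∑' k : Fin N → ℕ, η i k * ((coord k i : ℝ) - 1) ^ 2) = 0 := by
    rw [← h0]
    refine tsum_congr fun k => ?_
    rw [← hqi, coord_fin]
  rw [this] at hb
  norm_num at hb

include hA hi in
lemma rhoF_ge {kst : Fin N → ℕ} (hkst : 0 < η i kst ∧ 2 ≤ kst q)
    {K : ℝ} (hK : K ∈ Set.Icc (0:ℝ) 1) : η i kst ≤ rhoF N η i q K := by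
  have h1 : η i kst * phiP (kst q) K ≤ rhoF N η i q K :=
    Summable.le_tsum (summable_phiP hA hi hK) kst
      (fun k _ => mul_nonneg (hA.nonneg i hi k) (phiP_nonneg hK.1))
  have h2 : 1 ≤ phiP (kst q) K := phiP_ge_one hkst.2 hK.1
  nlinarith [hkst.1]

include hA hi in
lemma rhoF_continuousOn : ContinuousOn (rhoF N η i q) (Set.Icc (0:ℝ) 1) := by
  have hu : Summable (fun k : Fin N → ℕ => η i k * ((k q : ℝ) * (k q : ℝ))) :=
    summable_kq_sq hA hi
  apply TendstoUniformlyOn.continuousOn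
    (tendstoUniformlyOn_tsum hu (fun k K hK => ?_))
    (Filter.Eventually.frequently (Filter.Eventually.of_forall fun s => ?_))
  · rw [Real.norm_eq_abs, abs_of_nonneg (mul_nonneg (hA.nonneg i hi k) (phiP_nonneg hK.1))]
    have h1 : phiP (k q) K ≤ (k q : ℝ) * ((k q : ℝ) - 1) / 2 := phiP_le hK.1 hK.2
    have h2 : (0:ℝ) ≤ (k q : ℝ) := Nat.cast_nonneg _
    nlinarith [hA.nonneg i hi k]
  · exact (continuous_finset_sum s fun k _ =>
      continuous_const.mul (continuous_phiP (k q))).continuousOn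

include hA hi hqi in
lemma tsum_one_sub_pow {K : ℝ} (hK : K ∈ Set.Icc (0:ℝ) 1) :
    ∑' k : Fin N → ℕ, η i k * (1 - K ^ (k q))
      = (1 - K) - (1 - K) ^ 2 * rhoF N η i q K := by
  have h : (fun k : Fin N → ℕ => η i k * (1 - K ^ (k q)))
      = fun k => (η i k * (k q : ℝ)) * (1 - K) - (η i k * phiP (k q) K) * ((1 - K) ^ 2) := by
    funext k
    have := phiP_id (k q) K
    linear_combination (-(η i k)) * this
  rw [h, Summable.tsum_sub ((summable_kq hA hi).mul_right _)
      ((summable_phiP hA hi hK).mul_right _),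
    tsum_mul_right, tsum_mul_right, crit_tsum hA hi hqi, rhoF]
  ring

end RHO

/-! ### The one-variable fixed point map -/

section FIX

variable {N : ℕ} {η : ℕ → (Fin N → ℕ) → ℝ} (hA : HypA N η) {i : ℕ} (hi : i < N)
variable {q : Fin N} (hqi : (q : ℕ) = i) {u : Fin N → ℝ}

lemma Pv_update (hu : u q = 1) (K : ℝ) (k : Fin N → ℕ) :
    Pv (Function.update u q K) k = K ^ (k q) * Pv u k := by
  classical
  unfold Pv
  have h : (fun j : Fin N => Function.update u q K j ^ k j)
      = Function.update (fun j => u j ^ k j) q (K ^ k q) := by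
    funext j
    rcases eq_or_ne j q with h | h
    · subst h; simp
    · rw [Function.update_of_ne h, Function.update_of_ne h]
  rw [h, Finset.prod_update_of_mem (Finset.mem_univ q)]
  have h2 : ∏ j : Fin N, u j ^ k j = u q ^ k q * ∏ j ∈ Finset.univ.erase q, u j ^ k j :=
    (Finset.mul_prod_erase Finset.univ _ (Finset.mem_univ q)).symm
  rw [h2, hu, one_pow, one_mul, Finset.erase_eq]

include hA hi in
lemma pgf_update (hu : u q = 1) (K : ℝ) :
    pgf N η i (Function.update u q K)
      = ∑' k : Fin N → ℕ, η i k * (K ^ (k q) * Pv u k) := by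
  rw [pgf_eq_tsum_Pv]
  exact tsum_congr fun k => by rw [Pv_update hu]

include hA hi in
lemma pgf_update_continuousOn (hu0 : ∀ j, 0 ≤ u j) (hu1 : ∀ j, u j ≤ 1) (hu : u q = 1) :
    ContinuousOn (fun K => pgf N η i (Function.update u q K)) (Set.Icc (0:ℝ) 1) := by
  have heq : Set.EqOn (fun K => pgf N η i (Function.update u q K))
      (fun K => ∑' k : Fin N → ℕ, η i k * (K ^ (k q) * Pv u k)) (Set.Icc 0 1) :=
    fun K _ => pgf_update hA hi hu K
  apply ContinuousOn.congr _ heq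
  apply TendstoUniformlyOn.continuousOn
    (tendstoUniformlyOn_tsum (summable_eta hA hi) (fun k K hK => ?_))
    (Filter.Eventually.frequently (Filter.Eventually.of_forall fun s => ?_))
  · rw [Real.norm_eq_abs, abs_of_nonneg (mul_nonneg (hA.nonneg i hi k)
      (mul_nonneg (pow_nonneg hK.1 _) (Pv_nonneg hu0 k)))]
    have h1 : K ^ (k q) ≤ 1 := pow_le_one₀ hK.1 hK.2
    have h2 : Pv u k ≤ 1 := Pv_le_one hu0 hu1 k
    have h3 : 0 ≤ Pv u k := Pv_nonneg hu0 k
    have h4 : 0 ≤ K ^ (k q) := pow_nonneg hK.1 _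
    have h5 : K ^ (k q) * Pv u k ≤ 1 := by nlinarith
    have h6 := mul_le_of_le_one_right (hA.nonneg i hi k) h5
    linarith
  · exact (continuous_finset_sum s fun k _ =>
      continuous_const.mul ((continuous_pow (k q)).mul continuous_const)).continuousOn

include hA hi in
lemma sInf_fixedPoints_mem (hu0 : ∀ j, 0 ≤ u j) (hu1 : ∀ j, u j ≤ 1) (hu : u q = 1) :
    sInf {K : ℝ | K ∈ Set.Icc (0:ℝ) 1 ∧ K = pgf N η i (Function.update u q K)}
      ∈ {K : ℝ | K ∈ Set.Icc (0:ℝ) 1 ∧ K = pgf N η i (Function.update u q K)} := by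
  set f : ℝ → ℝ := fun K => pgf N η i (Function.update u q K) with hf
  have hcont : ContinuousOn f (Set.Icc 0 1) := pgf_update_continuousOn hA hi hu0 hu1 hu
  set S := {K : ℝ | K ∈ Set.Icc (0:ℝ) 1 ∧ K = f K} with hS
  have hbox : ∀ K : ℝ, K ∈ Set.Icc (0:ℝ) 1 → (∀ j, 0 ≤ Function.update u q K j)
      ∧ (∀ j, Function.update u q K j ≤ 1) := by
    intro K hK
    constructor <;> intro j <;> rcases eq_or_ne j q with h | h
    · subst h; simpa using hK.1
    · rw [Function.update_of_ne h]; exact hu0 j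
    · subst h; simpa using hK.2
    · rw [Function.update_of_ne h]; exact hu1 j
  have hclosed : IsClosed S := by
    have h1 : S = Set.Icc (0:ℝ) 1 ∩ (fun K => K - f K) ⁻¹' {0} := by
      ext K
      simp only [hS, Set.mem_setOf_eq, Set.mem_inter_iff, Set.mem_preimage,
        Set.mem_singleton_iff, sub_eq_zero]
    rw [h1]
    exact ContinuousOn.preimage_isClosed_of_isClosed
      ((continuousOn_id.sub hcont)) isClosed_Icc isClosed_singleton
  have hne : S.Nonempty := by
    have hc2 : ContinuousOn (fun K => f K - K) (Set.Icc 0 1) := hcont.sub continuousOn_id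
    have h0 : (0:ℝ) ∈ Set.Icc (f 1 - 1) (f 0 - 0) := by
      simp only [Set.mem_Icc]
      constructor
      · have := pgf_le_one hA hi (hbox 1 (by norm_num)).1 (hbox 1 (by norm_num)).2
        simpa using this
      · have := pgf_nonneg hA hi (v := Function.update u q 0) (hbox 0 (by norm_num)).1
        simpa using this
    obtain ⟨K, hKmem, hKeq⟩ := intermediate_value_Icc' (by norm_num : (0:ℝ) ≤ 1) hc2 h0
    refine ⟨K, hKmem, ?_⟩
    have hKeq' : f K - K = 0 := hKeq
    linarith
  have hbdd : BddBelow S := BddBelow.mono (fun K hK => hK.1) bddBelow_Icc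
  exact hclosed.csInf_mem hne hbdd

include hA hi in
lemma pgf_lt_one (hu0 : ∀ j, 0 ≤ u j) (hu1 : ∀ j, u j ≤ 1)
    {j₁ : Fin N} (hj1 : u j₁ < 1)
    (hmean : 0 < ∑' k : Fin N → ℕ, η i k * (k j₁ : ℝ)) :
    pgf N η i u < 1 := by
  have hex : ∃ k : Fin N → ℕ, 0 < η i k ∧ 1 ≤ k j₁ := by
    by_contra hcon
    push_neg at hcon
    have : ∀ k : Fin N → ℕ, η i k * (k j₁ : ℝ) = 0 := by
      intro k
      rcases eq_or_ne (η i k) 0 with h | h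
      · rw [h, zero_mul]
      · have := hcon k (lt_of_le_of_ne (hA.nonneg i hi k) (Ne.symm h))
        have : k j₁ = 0 := by omega
        rw [this]; simp
    rw [tsum_congr this] at hmean
    simp at hmean
  obtain ⟨k0, hk0, hk0j⟩ := hex
  have hP : Pv u k0 < 1 := by
    have h1 : Pv u k0 ≤ u j₁ ^ (k0 j₁) := by
      unfold Pv
      have h2 : ∏ j : Fin N, u j ^ k0 j
          = u j₁ ^ k0 j₁ * ∏ j ∈ Finset.univ.erase j₁, u j ^ k0 j :=
        (Finset.mul_prod_erase Finset.univ _ (Finset.mem_univ j₁)).symm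
      rw [h2]
      have h3 : ∏ j ∈ Finset.univ.erase j₁, u j ^ k0 j ≤ 1 :=
        Finset.prod_le_one (fun j _ => pow_nonneg (hu0 j) _)
          (fun j _ => pow_le_one₀ (hu0 j) (hu1 j))
      have h4 : 0 ≤ u j₁ ^ k0 j₁ := pow_nonneg (hu0 j₁) _
      nlinarith
    have h5 : u j₁ ^ k0 j₁ ≤ u j₁ := pow_le_of_le_one (hu0 j₁) (le_of_lt hj1) (by omega)
    linarith
  have := Summable.tsum_lt_tsum (f := fun k => η i k * Pv u k) (g := η i)
    (fun k => mul_le_of_le_one_right (hA.nonneg i hi k) (Pv_le_one hu0 hu1 k))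
    (by nlinarith : η i k0 * Pv u k0 < η i k0)
    (summable_mul_Pv hA hi hu0 hu1) (summable_eta hA hi)
  rw [(hA.total i hi).tsum_eq] at this
  rw [pgf_eq_tsum_Pv]
  exact this

/-- The `B` functional. -/
def Bfun (N : ℕ) (η : ℕ → (Fin N → ℕ) → ℝ) (i : ℕ) (q : Fin N) (u : Fin N → ℝ) (K : ℝ) : ℝ :=
  ∑' k : Fin N → ℕ, η i k * (K ^ (k q) * (1 - Pv u k))

include hA hi in
lemma summable_Bterm (hu0 : ∀ j, 0 ≤ u j) (hu1 : ∀ j, u j ≤ 1) {K : ℝ}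
    (hK : K ∈ Set.Icc (0:ℝ) 1) :
    Summable (fun k : Fin N → ℕ => η i k * (K ^ (k q) * (1 - Pv u k))) := by
  apply Summable.of_nonneg_of_le (fun k => ?_) (fun k => ?_) (summable_eta hA hi)
  · exact mul_nonneg (hA.nonneg i hi k) (mul_nonneg (pow_nonneg hK.1 _)
      (by linarith [Pv_le_one hu0 hu1 k]))
  · refine mul_le_of_le_one_right (hA.nonneg i hi k) ?_
    have h1 : K ^ (k q) ≤ 1 := pow_le_one₀ hK.1 hK.2
    have h3 : 0 ≤ Pv u k := Pv_nonneg hu0 k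
    have h4 : 0 ≤ K ^ (k q) := pow_nonneg hK.1 _
    nlinarith [Pv_le_one hu0 hu1 k]

include hA hi hqi in
lemma fixed_point_key (hu0 : ∀ j, 0 ≤ u j) (hu1 : ∀ j, u j ≤ 1) (hu : u q = 1)
    {K : ℝ} (hK : K ∈ Set.Icc (0:ℝ) 1)
    (hfix : K = pgf N η i (Function.update u q K)) :
    (1 - K) ^ 2 * rhoF N η i q K = Bfun N η i q u K := by
  have hbox0 : ∀ j, 0 ≤ Function.update u q K j := by
    intro j; rcases eq_or_ne j q with h | h
    · subst h; simpa using hK.1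
    · rw [Function.update_of_ne h]; exact hu0 j
  have hbox1 : ∀ j, Function.update u q K j ≤ 1 := by
    intro j; rcases eq_or_ne j q with h | h
    · subst h; simpa using hK.2
    · rw [Function.update_of_ne h]; exact hu1 j
  have h1 : 1 - K = ∑' k : Fin N → ℕ, η i k * (1 - K ^ (k q) * Pv u k) := by
    calc 1 - K = 1 - pgf N η i (Function.update u q K) := by rw [← hfix]
      _ = ∑' k : Fin N → ℕ, η i k * (1 - Pv (Function.update u q K) k) :=
          one_sub_pgf hA hi hbox0 hbox1
      _ = _ := tsum_congr fun k => by rw [Pv_update hu]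
  have h2 : (fun k : Fin N → ℕ => η i k * (1 - K ^ (k q) * Pv u k))
      = fun k => η i k * (1 - K ^ (k q)) + η i k * (K ^ (k q) * (1 - Pv u k)) := by
    funext k; ring
  have hs1 : Summable (fun k : Fin N → ℕ => η i k * (1 - K ^ (k q))) := by
    apply Summable.of_nonneg_of_le (fun k => ?_) (fun k => ?_) (summable_eta hA hi)
    · exact mul_nonneg (hA.nonneg i hi k) (by linarith [pow_le_one₀ hK.1 hK.2 (n := k q)])
    · exact mul_le_of_le_one_right (hA.nonneg i hi k)
        (by linarith [pow_nonneg hK.1 (k q)])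
  rw [h2, Summable.tsum_add hs1 (summable_Bterm hA hi hu0 hu1 hK),
    tsum_one_sub_pow hA hi hqi hK] at h1
  rw [Bfun]
  linarith

include hA hi in
lemma tsum_kq_Tv :
    ∑' k : Fin N → ℕ, η i k * ((k q : ℝ) * Tv u k)
      = ∑ j : Fin N, (1 - u j) * M2 N η i (q : ℕ) (j : ℕ) := by
  have h : (fun k : Fin N → ℕ => η i k * ((k q : ℝ) * Tv u k))
      = fun k => ∑ j : Fin N, η i k * ((k q : ℝ) * (k j : ℝ) * (1 - u j)) := by
    funext k
    unfold Tv
    rw [Finset.mul_sum, Finset.mul_sum]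
    refine Finset.sum_congr rfl fun j _ => by ring
  rw [h, Summable.tsum_finsetSum (fun j _ => by
    simpa [mul_assoc] using summable_coord2_mul hA hi q j (1 - u j))]
  refine Finset.sum_congr rfl fun j _ => ?_
  have h2 : (fun k : Fin N → ℕ => η i k * ((k q : ℝ) * (k j : ℝ) * (1 - u j)))
      = fun k => (η i k * ((coord k (q : ℕ) : ℝ) * (coord k (j : ℕ) : ℝ))) * (1 - u j) := by
    funext k; rw [coord_fin, coord_fin]; ring
  rw [h2, tsum_mul_right, M2, mul_comm]

include hA hi in
lemma summable_kq_Tv : Summable (fun k : Fin N → ℕ => η i k * ((k q : ℝ) * Tv u k)) := by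
  have h : (fun k : Fin N → ℕ => η i k * ((k q : ℝ) * Tv u k))
      = fun k => ∑ j : Fin N, η i k * ((k q : ℝ) * (k j : ℝ) * (1 - u j)) := by
    funext k
    unfold Tv
    rw [Finset.mul_sum, Finset.mul_sum]
    refine Finset.sum_congr rfl fun j _ => by ring
  rw [h]
  exact summable_sum fun j _ => by
    simpa [mul_assoc] using summable_coord2_mul hA hi q j (1 - u j)

include hA hi in
lemma Bfun_le (hu0 : ∀ j, 0 ≤ u j) (hu1 : ∀ j, u j ≤ 1) {K : ℝ}
    (hK : K ∈ Set.Icc (0:ℝ) 1) :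
    Bfun N η i q u K ≤ ∑ j : Fin N, (1 - u j) * meanM N η i (j : ℕ) := by
  rw [Bfun]
  calc ∑' k : Fin N → ℕ, η i k * (K ^ (k q) * (1 - Pv u k))
      ≤ ∑' k : Fin N → ℕ, η i k * (1 - Pv u k) := by
        apply Summable.tsum_le_tsum (fun k => ?_) (summable_Bterm hA hi hu0 hu1 hK)
        · apply Summable.of_nonneg_of_le (fun k => ?_) (fun k => ?_) (summable_eta hA hi)
          · exact mul_nonneg (hA.nonneg i hi k) (by linarith [Pv_le_one hu0 hu1 k])
          · exact mul_le_of_le_one_right (hA.nonneg i hi k)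
              (by linarith [Pv_nonneg hu0 k])
        · refine mul_le_mul_of_nonneg_left ?_ (hA.nonneg i hi k)
          have h1 : K ^ (k q) ≤ 1 := pow_le_one₀ hK.1 hK.2
          have h2 : 0 ≤ 1 - Pv u k := by linarith [Pv_le_one hu0 hu1 k]
          nlinarith
    _ = 1 - pgf N η i u := (one_sub_pgf hA hi hu0 hu1).symm
    _ ≤ _ := one_sub_pgf_le hA hi hu0 hu1

set_option maxHeartbeats 1000000 in
include hA hi in
lemma Bfun_ge (hu0 : ∀ j, 0 ≤ u j) (hu1 : ∀ j, u j ≤ 1) {K : ℝ}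
    (hK : K ∈ Set.Icc (0:ℝ) 1) :
    (∑ j : Fin N, (1 - u j) * meanM N η i (j : ℕ))
      - (∑ j : Fin N, ∑ l : Fin N, (1 - u j) * (1 - u l) * M2 N η i (j : ℕ) (l : ℕ)) / 2
      - (1 - K) * ∑ j : Fin N, (1 - u j) * M2 N η i (q : ℕ) (j : ℕ)
      ≤ Bfun N η i q u K := by
  have hsP : Summable (fun k : Fin N → ℕ => η i k * (1 - Pv u k)) := by
    apply Summable.of_nonneg_of_le (fun k => ?_) (fun k => ?_) (summable_eta hA hi)
    · exact mul_nonneg (hA.nonneg i hi k) (by linarith [Pv_le_one hu0 hu1 k])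
    · exact mul_le_of_le_one_right (hA.nonneg i hi k) (by linarith [Pv_nonneg hu0 k])
  have hsT : Summable (fun k : Fin N → ℕ => (1 - K) * (η i k * ((k q : ℝ) * Tv u k))) :=
    (summable_kq_Tv hA hi).mul_left (1 - K)
  have key : ∑' k : Fin N → ℕ,
      (η i k * (1 - Pv u k) - (1 - K) * (η i k * ((k q : ℝ) * Tv u k)))
      ≤ Bfun N η i q u K := by
    rw [Bfun]
    refine Summable.tsum_le_tsum (fun k => ?_) (hsP.sub hsT) (summable_Bterm hA hi hu0 hu1 hK)
    have h1 : 1 - K ^ (k q) ≤ (k q : ℝ) * (1 - K) := one_sub_pow_le hK.1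
    have h2 : 0 ≤ 1 - Pv u k := by linarith [Pv_le_one hu0 hu1 k]
    have h3 : 1 - Pv u k ≤ Tv u k := one_sub_Pv_le_Tv hu0 hu1 k
    have h4 : 0 ≤ 1 - K ^ (k q) := by linarith [pow_le_one₀ hK.1 hK.2 (n := k q)]
    have h5 : (1 - K ^ (k q)) * (1 - Pv u k) ≤ ((k q : ℝ) * (1 - K)) * Tv u k := by
      apply mul_le_mul h1 h3 h2
      have : (0:ℝ) ≤ (k q : ℝ) := Nat.cast_nonneg _
      nlinarith [hK.2]
    have hnn := hA.nonneg i hi k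
    nlinarith
  rw [Summable.tsum_sub hsP hsT, tsum_mul_left, tsum_kq_Tv hA hi] at key
  have h6 := one_sub_pgf_ge hA hi hu0 hu1
  have h7 := one_sub_pgf hA hi hu0 hu1
  rw [h7] at h6
  linarith

end FIX

/-! ### Unfolding `Kfix` -/

/-- The fixed environment vector at level `q`. -/
def envV (N : ℕ) (η : ℕ → (Fin N → ℕ) → ℝ) (τ : ℕ) (t : ℝ) (q : ℕ) : Fin N → ℝ :=
  fun j => if (j : ℕ) = q then 1
    else if q < (j : ℕ) ∧ (j : ℕ) ≤ τ then Kfix N η τ t (τ - (j : ℕ))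
    else if (j : ℕ) = τ + 1 then t else 1

lemma Kfix_fixed_eq {N : ℕ} (η : ℕ → (Fin N → ℕ) → ℝ) {τ q : ℕ} (hq : q ≤ τ)
    (hqN : q < N) (t : ℝ) :
    Kfix N η τ t (τ - q)
      = sInf {K : ℝ | K ∈ Set.Icc (0:ℝ) 1 ∧
          K = pgf N η q (Function.update (envV N η τ t q) ⟨q, hqN⟩ K)} := by
  rw [Kfix]
  have hτq : τ - (τ - q) = q := by omega
  congr 1
  ext K
  simp only [Set.mem_setOf_eq, hτq, and_congr_right_iff]
  intro hK
  have hvec : ∀ K : ℝ, (fun j : Fin N =>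
      if (j : ℕ) = q then K
      else if h : q < (j : ℕ) ∧ (j : ℕ) ≤ τ then Kfix N η τ t (τ - (j : ℕ))
      else if (j : ℕ) = τ + 1 then t else 1)
      = Function.update (envV N η τ t q) ⟨q, hqN⟩ K := by
    intro K
    funext j
    rcases eq_or_ne (j : ℕ) q with h | h
    · have : j = (⟨q, hqN⟩ : Fin N) := Fin.ext h
      subst this
      simp [envV]
    · have hne : j ≠ (⟨q, hqN⟩ : Fin N) := fun hc => h (by rw [hc])
      rw [Function.update_of_ne hne]
      simp only [envV, if_neg h]
      rcases Classical.em (q < (j : ℕ) ∧ (j : ℕ) ≤ τ) with h2 | h2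
      · rw [dif_pos h2, if_pos h2]
      · rw [dif_neg h2, if_neg h2]
  rw [hvec K]

/-- `V_q(t)`: `K_{q,τ}(t)` for `q ≤ τ`, and `t` itself for `q > τ`. -/
def Vq (N : ℕ) (η : ℕ → (Fin N → ℕ) → ℝ) (τ q : ℕ) (t : ℝ) : ℝ :=
  if q ≤ τ then Kfix N η τ t (τ - q) else t

/-- `D_q`. -/
def Dq (N : ℕ) (η : ℕ → (Fin N → ℕ) → ℝ) (τ q : ℕ) : ℝ :=
  if q ≤ τ then dAux (bCoef N η) (mCoef N η) τ (τ - q) else 1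

section IND

variable {N : ℕ} {η : ℕ → (Fin N → ℕ) → ℝ} (hA : HypA N η) {τ : ℕ} (hτ : τ + 1 < N)

include hA hτ in
lemma dAux_pos : ∀ r, r ≤ τ → 0 < dAux (bCoef N η) (mCoef N η) τ r := by
  intro r
  induction r with
  | zero =>
    intro _
    rw [dAux]
    exact Real.sqrt_pos.2 (div_pos (hA.mPos τ hτ) (hA.bPos τ (by omega)))
  | succ r ih =>
    intro hr
    rw [dAux]
    apply Real.sqrt_pos.2
    apply div_pos
    · exact mul_pos (hA.mPos (τ - (r+1)) (by omega)) (ih (by omega))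
    · exact hA.bPos (τ - (r+1)) (by omega)

include hA hτ in
lemma Dq_pos {q : ℕ} (hq : q ≤ τ + 1) : 0 < Dq N η τ q := by
  rw [Dq]
  rcases Classical.em (q ≤ τ) with h | h
  · rw [if_pos h]; exact dAux_pos hA hτ _ (by omega)
  · rw [if_neg h]; norm_num

include hτ in
lemma Dq_rec {q : ℕ} (hq : q ≤ τ) :
    Dq N η τ q = Real.sqrt (mCoef N η q * Dq N η τ (q + 1) / bCoef N η q) := by
  rcases Classical.em (q + 1 ≤ τ) with h | h
  · have h1 : τ - q = (τ - (q+1)) + 1 := by omega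
    rw [Dq, Dq, if_pos hq, if_pos h, h1, dAux]
    have h2 : τ - (τ - (q + 1) + 1) = q := by omega
    rw [h2]
  · have hqτ : q = τ := by omega
    rw [Dq, Dq, if_pos hq, if_neg h]
    have h1 : τ - q = 0 := by omega
    rw [h1, dAux, mul_one, hqτ]


lemma envV_eq_V {t : ℝ} {q : ℕ} {j : Fin N} (h1 : q < (j : ℕ)) (h2 : (j : ℕ) ≤ τ + 1) :
    envV N η τ t q j = Vq N η τ (j : ℕ) t := by
  rcases Classical.em ((j : ℕ) ≤ τ) with h | h
  · rw [envV, if_neg (show ¬((j:ℕ) = q) by omega), if_pos ⟨h1, h⟩, Vq, if_pos h]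
  · have h3 : (j : ℕ) = τ + 1 := by omega
    rw [envV, if_neg (show ¬((j:ℕ) = q) by omega),
      if_neg (show ¬(q < (j:ℕ) ∧ (j:ℕ) ≤ τ) by omega), if_pos h3, Vq,
      if_neg (show ¬((j:ℕ) ≤ τ) by omega)]

lemma envV_eq_one {t : ℝ} {q : ℕ} (hq : q ≤ τ + 1) {j : Fin N}
    (h : (j : ℕ) = q ∨ (j : ℕ) < q ∨ τ + 1 < (j : ℕ)) : envV N η τ t q j = 1 := by
  rcases h with h | h | h
  · rw [envV, if_pos h]
  · rw [envV, if_neg (show ¬((j:ℕ) = q) by omega),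
      if_neg (show ¬(q < (j:ℕ) ∧ (j:ℕ) ≤ τ) by omega),
      if_neg (show ¬((j:ℕ) = τ + 1) by omega)]
  · rw [envV, if_neg (show ¬((j:ℕ) = q) by omega),
      if_neg (show ¬(q < (j:ℕ) ∧ (j:ℕ) ≤ τ) by omega),
      if_neg (show ¬((j:ℕ) = τ + 1) by omega)]

include hA hτ in
lemma main_induction :
    ∀ r : ℕ, r ≤ τ + 1 →
      (∀ t ∈ Set.Ico (0:ℝ) 1, Vq N η τ (τ + 1 - r) t ∈ Set.Ico (0:ℝ) 1) ∧
      Filter.Tendsto (fun t => (1 - Vq N η τ (τ + 1 - r) t) / (1 - t) ^ ((1/2:ℝ) ^ r))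
        (nhdsWithin 1 (Set.Ico (0:ℝ) 1)) (nhds (Dq N η τ (τ + 1 - r))) := by
  intro r
  induction r using Nat.strong_induction_on with
  | _ r IH =>
  intro hr
  have hIco : ∀ᶠ t in nhdsWithin (1:ℝ) (Set.Ico (0:ℝ) 1), t ∈ Set.Ico (0:ℝ) 1 :=
    self_mem_nhdsWithin
  rcases Nat.eq_zero_or_pos r with hr0 | hrpos
  · subst hr0
    have hV : ∀ t : ℝ, Vq N η τ (τ + 1 - 0) t = t := by
      intro t; rw [Nat.sub_zero, Vq, if_neg (by omega)]
    constructor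
    · intro t ht; rw [hV]; exact ht
    · have hD : Dq N η τ (τ + 1 - 0) = 1 := by
        rw [Nat.sub_zero, Dq, if_neg (by omega)]
      rw [hD]
      apply Filter.Tendsto.congr' _ tendsto_const_nhds
      filter_upwards [hIco] with t ht
      rw [hV, pow_zero, Real.rpow_one, div_self (by linarith [ht.2] : (1:ℝ) - t ≠ 0)]
  -- Inductive step
  set q : ℕ := τ + 1 - r with hqdef
  have hq : q ≤ τ := by omega
  have hqr : τ + 1 - r = q := rfl
  have hqN : q < N := by omega
  set qF : Fin N := ⟨q, hqN⟩ with hqF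
  have hqF1 : (qF : ℕ) = q := rfl
  -- IH for higher levels
  have IHlev : ∀ j : ℕ, q < j → j ≤ τ + 1 →
      (∀ t ∈ Set.Ico (0:ℝ) 1, Vq N η τ j t ∈ Set.Ico (0:ℝ) 1) ∧
      Filter.Tendsto (fun t => (1 - Vq N η τ j t) / (1 - t) ^ ((1/2:ℝ) ^ (τ + 1 - j)))
        (nhdsWithin 1 (Set.Ico (0:ℝ) 1)) (nhds (Dq N η τ j)) := by
    intro j hj1 hj2
    have h1 : τ + 1 - j < r := by omega
    have h0 := IH (τ + 1 - j) h1 (by omega)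
    have h2 : τ + 1 - (τ + 1 - j) = j := by omega
    rwa [h2] at h0
  -- the environment is in the box
  have hbox : ∀ t ∈ Set.Ico (0:ℝ) 1,
      (∀ j : Fin N, 0 ≤ envV N η τ t q j) ∧ (∀ j : Fin N, envV N η τ t q j ≤ 1) := by
    intro t ht
    have key : ∀ j : Fin N, 0 ≤ envV N η τ t q j ∧ envV N η τ t q j ≤ 1 := by
      intro j
      rcases Classical.em (q < (j:ℕ) ∧ (j:ℕ) ≤ τ + 1) with h | h
      · rw [envV_eq_V h.1 h.2]
        have h3 := (IHlev (j:ℕ) h.1 h.2).1 t ht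
        exact ⟨h3.1, le_of_lt h3.2⟩
      · rw [envV_eq_one (by omega) (by omega)]
        norm_num
    exact ⟨fun j => (key j).1, fun j => (key j).2⟩
  have henvq : ∀ t : ℝ, envV N η τ t q qF = 1 := fun t => envV_eq_one (by omega) (Or.inl hqF1)
  -- fixed point properties
  have hfix : ∀ t ∈ Set.Ico (0:ℝ) 1,
      Vq N η τ q t ∈ Set.Icc (0:ℝ) 1 ∧
      Vq N η τ q t = pgf N η q (Function.update (envV N η τ t q) qF (Vq N η τ q t)) := by
    intro t ht
    have hVeq : Vq N η τ q t = Kfix N η τ t (τ - q) := by rw [Vq, if_pos hq]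
    rw [hVeq, Kfix_fixed_eq η hq hqN t]
    have h := sInf_fixedPoints_mem (i := q) (q := qF) (u := envV N η τ t q) hA hqN
      (hbox t ht).1 (hbox t ht).2 (henvq t)
    simpa [Set.mem_setOf_eq] using h
  have hlt1 : ∀ t ∈ Set.Ico (0:ℝ) 1, Vq N η τ q t < 1 := by
    intro t ht
    rcases lt_or_eq_of_le ((hfix t ht).1).2 with h | h
    · exact h
    · exfalso
      have hup : Function.update (envV N η τ t q) qF (Vq N η τ q t) = envV N η τ t q := by
        rw [h, ← henvq t, Function.update_eq_self]
      have hfx := (hfix t ht).2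
      rw [hup] at hfx
      have hj₁mem : q + 1 < N := by omega
      set j₁ : Fin N := ⟨q+1, hj₁mem⟩ with hj₁
      have hj₁lt : envV N η τ t q j₁ < 1 := by
        rw [envV_eq_V (show q < q+1 by omega) (show q+1 ≤ τ+1 by omega)]
        exact ((IHlev (q+1) (by omega) (by omega)).1 t ht).2
      have hmean : 0 < ∑' k : Fin N → ℕ, η q k * (k j₁ : ℝ) := by
        have hm := hA.mPos q (by omega)
        rw [mCoef, meanM] at hm
        have heq : ∑' k : Fin N → ℕ, η q k * (coord k (q+1) : ℝ)
            = ∑' k : Fin N → ℕ, η q k * (k j₁ : ℝ) := by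
          refine tsum_congr fun k => ?_
          rw [show q + 1 = ((j₁ : ℕ)) from rfl, coord_fin]
        rw [heq] at hm
        exact hm
      have hlt := pgf_lt_one hA hqN (hbox t ht).1 (hbox t ht).2 hj₁lt hmean
      rw [← hfx, h] at hlt
      exact absurd hlt (by norm_num)
  have hmem : ∀ t ∈ Set.Ico (0:ℝ) 1, Vq N η τ q t ∈ Set.Ico (0:ℝ) 1 :=
    fun t ht => ⟨((hfix t ht).1).1, hlt1 t ht⟩
  refine ⟨hmem, ?_⟩
  -- now the limit
  set γ' : ℝ := (1/2:ℝ) ^ (r - 1) with hγ'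
  have hIH1 := IHlev (q+1) (by omega) (by omega)
  have hepos : ∀ t ∈ Set.Ico (0:ℝ) 1, 0 < 1 - Vq N η τ (q+1) t :=
    fun t ht => by linarith [((hIH1.1 t ht)).2]
  have hlim_e : Filter.Tendsto (fun t => (1 - Vq N η τ (q+1) t) / (1 - t) ^ γ')
      (nhdsWithin 1 (Set.Ico (0:ℝ) 1)) (nhds (Dq N η τ (q+1))) := by
    have h2 : τ + 1 - (q+1) = r - 1 := by omega
    have h0 := hIH1.2
    rwa [h2] at h0
  have hD1pos : 0 < Dq N η τ (q+1) := Dq_pos hA hτ (by omega)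
  have hbase : Filter.Tendsto (fun t : ℝ => 1 - t)
      (nhdsWithin 1 (Set.Ico (0:ℝ) 1)) (nhds 0) := by
    have h0 : Filter.Tendsto (fun t : ℝ => 1 - t) (nhds 1) (nhds 0) := by
      have h1 : Continuous (fun t : ℝ => 1 - t) := continuous_const.sub continuous_id
      have h2 := h1.tendsto (1:ℝ)
      norm_num at h2
      exact h2
    exact h0.mono_left nhdsWithin_le_nhds
  have hrpow0 : ∀ c : ℝ, 0 < c → Filter.Tendsto (fun t : ℝ => (1-t) ^ c)
      (nhdsWithin 1 (Set.Ico (0:ℝ) 1)) (nhds 0) := by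
    intro c hc
    have h1 : Filter.Tendsto (fun y : ℝ => y ^ c) (nhds 0) (nhds ((0:ℝ) ^ c)) :=
      (Real.continuousAt_rpow_const 0 c (Or.inr hc.le)).tendsto
    rw [Real.zero_rpow (ne_of_gt hc)] at h1
    exact h1.comp hbase
  have hVlim : ∀ j : ℕ, q < j → j ≤ τ + 1 → Filter.Tendsto (fun t => 1 - Vq N η τ j t)
      (nhdsWithin 1 (Set.Ico (0:ℝ) 1)) (nhds 0) := by
    intro j h1 h2
    have h3 := (IHlev j h1 h2).2
    have h4 := h3.mul (hrpow0 ((1/2:ℝ)^(τ+1-j)) (by positivity))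
    rw [mul_zero] at h4
    refine Filter.Tendsto.congr' ?_ h4
    filter_upwards [hIco] with t ht
    have h5 : (0:ℝ) < (1-t) ^ ((1/2:ℝ)^(τ+1-j)) :=
      Real.rpow_pos_of_pos (by linarith [ht.2]) _
    rw [div_mul_cancel₀ _ (ne_of_gt h5)]
  have claim_a0 : ∀ j : Fin N, Filter.Tendsto (fun t => 1 - envV N η τ t q j)
      (nhdsWithin 1 (Set.Ico (0:ℝ) 1)) (nhds 0) := by
    intro j
    rcases Classical.em (q < (j:ℕ) ∧ (j:ℕ) ≤ τ + 1) with h2 | h2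
    · refine Filter.Tendsto.congr' ?_ (hVlim (j:ℕ) h2.1 h2.2)
      filter_upwards with t
      rw [envV_eq_V h2.1 h2.2]
    · refine Filter.Tendsto.congr' ?_ (tendsto_const_nhds : Filter.Tendsto (fun _ : ℝ => (0:ℝ)) _ _)
      filter_upwards with t
      rw [envV_eq_one (by omega) (by omega)]
      ring
  have hratio : ∀ j : Fin N, Filter.Tendsto
      (fun t => (1 - envV N η τ t q j) / (1 - Vq N η τ (q+1) t))
      (nhdsWithin 1 (Set.Ico (0:ℝ) 1)) (nhds (if (j:ℕ) = q + 1 then 1 else 0)) := by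
    intro j
    rcases Classical.em ((j:ℕ) = q + 1) with hj | hj
    · rw [if_pos hj]
      refine Filter.Tendsto.congr' ?_ (tendsto_const_nhds : Filter.Tendsto (fun _ : ℝ => (1:ℝ)) _ _)
      filter_upwards [hIco] with t ht
      have h1 : envV N η τ t q j = Vq N η τ (q+1) t := by
        rw [envV_eq_V (by omega) (by omega), hj]
      rw [h1, div_self (ne_of_gt (hepos t ht))]
    · rcases Classical.em (q < (j:ℕ) ∧ (j:ℕ) ≤ τ + 1) with h2 | h2
      · rw [if_neg hj]
        have hj2 : q + 2 ≤ (j:ℕ) := by omega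
        set γj : ℝ := (1/2:ℝ)^(τ+1-(j:ℕ)) with hγjdef
        have hγjpos : (0:ℝ) < γj := by rw [hγjdef]; positivity
        have hlt : γ' < γj := by
          rw [hγ', hγjdef]
          apply pow_lt_pow_right_of_lt_one₀ (by norm_num) (by norm_num)
          omega
        have hprod := ((IHlev (j:ℕ) h2.1 h2.2).2.mul
            (hrpow0 (γj - γ') (by linarith))).mul
            (hlim_e.inv₀ (ne_of_gt hD1pos))
        rw [mul_zero, zero_mul] at hprod
        refine Filter.Tendsto.congr' ?_ hprod
        filter_upwards [hIco] with t ht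
        have h1t : (0:ℝ) < 1 - t := by linarith [ht.2]
        have hpj : (0:ℝ) < (1-t) ^ γj := Real.rpow_pos_of_pos h1t _
        have hp' : (0:ℝ) < (1-t) ^ γ' := Real.rpow_pos_of_pos h1t _
        have hsub : (1-t) ^ (γj - γ') = (1-t) ^ γj / (1-t) ^ γ' := Real.rpow_sub h1t _ _
        have hee : (1 - Vq N η τ (q+1) t) ≠ 0 := ne_of_gt (hepos t ht)
        rw [envV_eq_V h2.1 h2.2, hsub]
        rw [inv_div, div_mul_div_comm, div_mul_div_comm]
        rw [div_eq_div_iff (by positivity) (by positivity)]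
        ring
      · rw [if_neg hj]
        refine Filter.Tendsto.congr' ?_ (tendsto_const_nhds : Filter.Tendsto (fun _ : ℝ => (0:ℝ)) _ _)
        filter_upwards with t
        rw [envV_eq_one (by omega) (by omega)]
        norm_num
  -- the sums
  have hj₁mem : q + 1 < N := by omega
  set jnext : Fin N := ⟨q+1, hj₁mem⟩ with hjnext
  have hsum_ite : ∀ g : Fin N → ℝ,
      (∑ j : Fin N, (if (j:ℕ) = q + 1 then (1:ℝ) else 0) * g j) = g jnext := by
    intro g
    have h1 : ∀ j : Fin N, (if (j:ℕ) = q + 1 then (1:ℝ) else 0) * g j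
        = if j = jnext then g j else 0 := by
      intro j
      rcases Classical.em ((j:ℕ) = q + 1) with hc | hc
      · rw [if_pos hc, if_pos (Fin.ext hc), one_mul]
      · rw [if_neg hc, if_neg (fun hh => hc (by rw [hh])), zero_mul]
    rw [Finset.sum_congr rfl (fun j _ => h1 j), Finset.sum_ite_eq' Finset.univ jnext g,
      if_pos (Finset.mem_univ _)]
  have hSm_e : Filter.Tendsto (fun t =>
      (∑ j : Fin N, (1 - envV N η τ t q j) * meanM N η q (j:ℕ)) / (1 - Vq N η τ (q+1) t))
      (nhdsWithin 1 (Set.Ico (0:ℝ) 1)) (nhds (mCoef N η q)) := by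
    have h2 := tendsto_finset_sum (f := fun (j : Fin N) t =>
        ((1 - envV N η τ t q j) / (1 - Vq N η τ (q+1) t)) * meanM N η q (j:ℕ))
      Finset.univ (fun j _ => (hratio j).mul_const (meanM N η q (j:ℕ)))
    rw [hsum_ite (fun j => meanM N η q (j:ℕ))] at h2
    have h3 : meanM N η q ((jnext : ℕ)) = mCoef N η q := by rw [mCoef]
    rw [h3] at h2
    refine Filter.Tendsto.congr' ?_ h2
    filter_upwards with t
    rw [Finset.sum_div]
    exact Finset.sum_congr rfl fun j _ => by ring
  have hSm0 : Filter.Tendsto (fun t =>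
      ∑ j : Fin N, (1 - envV N η τ t q j) * meanM N η q (j:ℕ))
      (nhdsWithin 1 (Set.Ico (0:ℝ) 1)) (nhds 0) := by
    have h2 := tendsto_finset_sum (f := fun (j : Fin N) t =>
        (1 - envV N η τ t q j) * meanM N η q (j:ℕ))
      Finset.univ (fun j _ => (claim_a0 j).mul_const (meanM N η q (j:ℕ)))
    simpa using h2
  have hQd_e : Filter.Tendsto (fun t =>
      (∑ j : Fin N, ∑ l : Fin N, (1 - envV N η τ t q j) * (1 - envV N η τ t q l)
        * M2 N η q (j:ℕ) (l:ℕ)) / (1 - Vq N η τ (q+1) t))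
      (nhdsWithin 1 (Set.Ico (0:ℝ) 1)) (nhds 0) := by
    have h2 := tendsto_finset_sum (f := fun (j : Fin N) t =>
        ∑ l : Fin N, (1 - envV N η τ t q j)
          * ((1 - envV N η τ t q l) / (1 - Vq N η τ (q+1) t)) * M2 N η q (j:ℕ) (l:ℕ))
      Finset.univ (fun j _ => by
        exact tendsto_finset_sum Finset.univ (fun l _ => by
          have h0 := ((claim_a0 j).mul (hratio l)).mul_const (M2 N η q (j:ℕ) (l:ℕ))
          rw [zero_mul, zero_mul] at h0
          exact h0))
    simp only [Finset.sum_const_zero] at h2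
    refine Filter.Tendsto.congr' ?_ h2
    filter_upwards with t
    rw [Finset.sum_div]
    refine Finset.sum_congr rfl fun j _ => ?_
    rw [Finset.sum_div]
    exact Finset.sum_congr rfl fun l _ => by ring
  have hXs_e : Filter.Tendsto (fun t =>
      (∑ j : Fin N, (1 - envV N η τ t q j) * M2 N η q q (j:ℕ)) / (1 - Vq N η τ (q+1) t))
      (nhdsWithin 1 (Set.Ico (0:ℝ) 1)) (nhds (M2 N η q q (q+1))) := by
    have h2 := tendsto_finset_sum (f := fun (j : Fin N) t =>
        ((1 - envV N η τ t q j) / (1 - Vq N η τ (q+1) t)) * M2 N η q q (j:ℕ))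
      Finset.univ (fun j _ => (hratio j).mul_const (M2 N η q q (j:ℕ)))
    rw [hsum_ite (fun j => M2 N η q q (j:ℕ))] at h2
    refine Filter.Tendsto.congr' ?_ h2
    filter_upwards with t
    rw [Finset.sum_div]
    exact Finset.sum_congr rfl fun j _ => by ring
  -- fixed point quantitative analysis
  obtain ⟨kst, hkst⟩ := exists_kstar (i := q) (q := qF) hA hqN rfl
  have hcpos : 0 < η q kst := hkst.1
  have hbpos : 0 < bCoef N η q := hA.bPos q (by omega)
  have hKmem : ∀ t ∈ Set.Ico (0:ℝ) 1, Vq N η τ q t ∈ Set.Icc (0:ℝ) 1 :=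
    fun t ht => (hfix t ht).1
  have hkey : ∀ t ∈ Set.Ico (0:ℝ) 1,
      (1 - Vq N η τ q t)^2 * rhoF N η q qF (Vq N η τ q t)
        = Bfun N η q qF (envV N η τ t q) (Vq N η τ q t) :=
    fun t ht => fixed_point_key (i := q) (q := qF) hA hqN rfl
      (hbox t ht).1 (hbox t ht).2 (henvq t) (hKmem t ht) ((hfix t ht).2)
  have hrho_lb : ∀ t ∈ Set.Ico (0:ℝ) 1,
      η q kst ≤ rhoF N η q qF (Vq N η τ q t) :=
    fun t ht => rhoF_ge hA hqN hkst (hKmem t ht)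
  have hB_ub : ∀ t ∈ Set.Ico (0:ℝ) 1,
      Bfun N η q qF (envV N η τ t q) (Vq N η τ q t)
        ≤ ∑ j : Fin N, (1 - envV N η τ t q j) * meanM N η q (j:ℕ) :=
    fun t ht => Bfun_le (i := q) (q := qF) hA hqN (hbox t ht).1 (hbox t ht).2 (hKmem t ht)
  have hB_lb : ∀ t ∈ Set.Ico (0:ℝ) 1,
      (∑ j : Fin N, (1 - envV N η τ t q j) * meanM N η q (j:ℕ))
        - (∑ j : Fin N, ∑ l : Fin N, (1 - envV N η τ t q j) * (1 - envV N η τ t q l)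
            * M2 N η q (j:ℕ) (l:ℕ)) / 2
        - (1 - Vq N η τ q t) * ∑ j : Fin N, (1 - envV N η τ t q j) * M2 N η q q (j:ℕ)
        ≤ Bfun N η q qF (envV N η τ t q) (Vq N η τ q t) := by
    intro t ht
    have h0 := Bfun_ge (i := q) (q := qF) hA hqN
      (hbox t ht).1 (hbox t ht).2 (hKmem t ht)
    simpa [hqF1] using h0
  have hx_sq_le : ∀ t ∈ Set.Ico (0:ℝ) 1, (1 - Vq N η τ q t)^2
      ≤ (∑ j : Fin N, (1 - envV N η τ t q j) * meanM N η q (j:ℕ)) / η q kst := by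
    intro t ht
    have h1 := hkey t ht
    have h2 := hrho_lb t ht
    have h3 := hB_ub t ht
    have h4 : (1 - Vq N η τ q t)^2 * η q kst
        ≤ (1 - Vq N η τ q t)^2 * rhoF N η q qF (Vq N η τ q t) :=
      mul_le_mul_of_nonneg_left h2 (sq_nonneg _)
    rw [le_div_iff₀ hcpos]
    linarith
  have hx0 : Filter.Tendsto (fun t => 1 - Vq N η τ q t)
      (nhdsWithin 1 (Set.Ico (0:ℝ) 1)) (nhds 0) := by
    have hsq : Filter.Tendsto (fun t => Real.sqrt
        ((∑ j : Fin N, (1 - envV N η τ t q j) * meanM N η q (j:ℕ)) / η q kst))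
        (nhdsWithin 1 (Set.Ico (0:ℝ) 1)) (nhds 0) := by
      have h1 := hSm0.div_const (η q kst)
      rw [zero_div] at h1
      have h2 := (Real.continuous_sqrt.tendsto 0).comp h1
      rw [Real.sqrt_zero] at h2
      exact h2
    apply tendsto_of_tendsto_of_tendsto_of_le_of_le' tendsto_const_nhds hsq
    · filter_upwards [hIco] with t ht
      linarith [hlt1 t ht]
    · filter_upwards [hIco] with t ht
      calc 1 - Vq N η τ q t = Real.sqrt ((1 - Vq N η τ q t)^2) :=
            (Real.sqrt_sq (by linarith [hlt1 t ht])).symm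
        _ ≤ _ := Real.sqrt_le_sqrt (hx_sq_le t ht)
  have hK1 : Filter.Tendsto (fun t => Vq N η τ q t)
      (nhdsWithin 1 (Set.Ico (0:ℝ) 1)) (nhdsWithin 1 (Set.Icc (0:ℝ) 1)) := by
    rw [tendsto_nhdsWithin_iff]
    constructor
    · have h2 : Filter.Tendsto (fun t => 1 - (1 - Vq N η τ q t))
          (nhdsWithin 1 (Set.Ico (0:ℝ) 1)) (nhds (1 - 0)) := tendsto_const_nhds.sub hx0
      rw [sub_zero] at h2
      refine Filter.Tendsto.congr' ?_ h2
      filter_upwards with t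
      ring
    · filter_upwards [hIco] with t ht
      exact hKmem t ht
  have hrhoK : Filter.Tendsto (fun t => rhoF N η q qF (Vq N η τ q t))
      (nhdsWithin 1 (Set.Ico (0:ℝ) 1)) (nhds (bCoef N η q)) := by
    have hcont := rhoF_continuousOn (i := q) (q := qF) hA hqN
    have h1 := (hcont 1 (by norm_num)).tendsto
    rw [rhoF_one (i := q) (q := qF) hA hqN rfl] at h1
    exact h1.comp hK1
  have hBe : Filter.Tendsto (fun t =>
      Bfun N η q qF (envV N η τ t q) (Vq N η τ q t) / (1 - Vq N η τ (q+1) t))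
      (nhdsWithin 1 (Set.Ico (0:ℝ) 1)) (nhds (mCoef N η q)) := by
    have hlow := (hSm_e.sub (hQd_e.div_const 2)).sub (hx0.mul hXs_e)
    rw [zero_div, sub_zero, zero_mul, sub_zero] at hlow
    apply tendsto_of_tendsto_of_tendsto_of_le_of_le' hlow hSm_e
    · filter_upwards [hIco] with t ht
      have h1 := hB_lb t ht
      have h2 := hepos t ht
      have heq : (∑ j : Fin N, (1 - envV N η τ t q j) * meanM N η q (j:ℕ))
            / (1 - Vq N η τ (q+1) t)
          - (∑ j : Fin N, ∑ l : Fin N, (1 - envV N η τ t q j) * (1 - envV N η τ t q l)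
              * M2 N η q (j:ℕ) (l:ℕ)) / (1 - Vq N η τ (q+1) t) / 2
          - (1 - Vq N η τ q t) * ((∑ j : Fin N, (1 - envV N η τ t q j) * M2 N η q q (j:ℕ))
              / (1 - Vq N η τ (q+1) t))
          = ((∑ j : Fin N, (1 - envV N η τ t q j) * meanM N η q (j:ℕ))
            - (∑ j : Fin N, ∑ l : Fin N, (1 - envV N η τ t q j) * (1 - envV N η τ t q l)
                * M2 N η q (j:ℕ) (l:ℕ)) / 2
            - (1 - Vq N η τ q t) * ∑ j : Fin N, (1 - envV N η τ t q j) * M2 N η q q (j:ℕ))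
            / (1 - Vq N η τ (q+1) t) := by
        ring
      rw [heq]
      gcongr
    · filter_upwards [hIco] with t ht
      have h2 := hepos t ht
      have h1 := hB_ub t ht
      gcongr
  -- `x²/e` limit
  have hx2e : Filter.Tendsto (fun t => (1 - Vq N η τ q t)^2 / (1 - Vq N η τ (q+1) t))
      (nhdsWithin 1 (Set.Ico (0:ℝ) 1)) (nhds (mCoef N η q / bCoef N η q)) := by
    have h1 := hBe.div hrhoK (ne_of_gt hbpos)
    refine Filter.Tendsto.congr' ?_ h1
    filter_upwards [hIco] with t ht
    have hρpos : 0 < rhoF N η q qF (Vq N η τ q t) := lt_of_lt_of_le hcpos (hrho_lb t ht)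
    have hee : (1 - Vq N η τ (q+1) t) ≠ 0 := ne_of_gt (hepos t ht)
    simp only [Pi.div_apply]
    rw [← hkey t ht]
    field_simp
  have hprod := hx2e.mul hlim_e
  have hfin := (Real.continuous_sqrt.tendsto _).comp hprod
  have hDqv : Dq N η τ q = Real.sqrt (mCoef N η q / bCoef N η q * Dq N η τ (q+1)) := by
    rw [Dq_rec hτ hq]
    congr 1
    ring
  rw [hDqv]
  refine Filter.Tendsto.congr' ?_ hfin
  filter_upwards [hIco] with t ht
  have h1t : (0:ℝ) < 1 - t := by linarith [ht.2]
  have hppos : (0:ℝ) < (1-t) ^ ((1/2:ℝ)^r) := Real.rpow_pos_of_pos h1t _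
  have hxnn : 0 ≤ 1 - Vq N η τ q t := by linarith [hlt1 t ht]
  have hee : (1 - Vq N η τ (q+1) t) ≠ 0 := ne_of_gt (hepos t ht)
  have hsqp : ((1-t) ^ ((1/2:ℝ)^r))^2 = (1-t) ^ γ' := by
    rw [← Real.rpow_natCast ((1-t) ^ ((1/2:ℝ)^r)) 2, ← Real.rpow_mul h1t.le]
    congr 1
    rw [hγ']
    have h2 : r = (r-1)+1 := by omega
    rw [h2, pow_succ]
    push_cast
    ring
  have harg : (1 - Vq N η τ q t)^2/(1 - Vq N η τ (q+1) t)
        * ((1 - Vq N η τ (q+1) t)/((1-t)^γ'))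
      = ((1 - Vq N η τ q t)/((1-t) ^ ((1/2:ℝ)^r)))^2 := by
    rw [div_pow, hsqp]
    field_simp
  simp only [Function.comp_apply]
  rw [harg, Real.sqrt_sq (div_nonneg hxnn hppos.le)]

end IND

/-- `1 - K_{1i}(t) ∼ D_i (1-t)^{1/2^i}` as `t ↑ 1`
(types 0-based: `τ = i - 1`, `K_{1i} = K_{0,τ} = Kfix N η τ t τ`). -/
theorem emigrant_generating_function_tail
    (N : ℕ) (hN : 2 ≤ N) (η : ℕ → (Fin N → ℕ) → ℝ) (hA : HypA N η)
    (τ : ℕ) (hτ : τ + 1 < N) :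
    Tendsto
      (fun t : ℝ => (1 - Kfix N η τ t τ) / (1 - t) ^ ((1 / 2 : ℝ) ^ (τ + 1)))
      (nhdsWithin 1 (Set.Ico (0 : ℝ) 1))
      (nhds (DConst N η τ)) := by
  have h := (main_induction hA hτ (τ+1) le_rfl).2
  have h1 : τ + 1 - (τ + 1) = 0 := by omega
  rw [h1] at h
  have h2 : (fun t : ℝ => (1 - Vq N η τ 0 t) / (1 - t) ^ ((1/2:ℝ) ^ (τ+1)))
      = fun t : ℝ => (1 - Kfix N η τ t τ) / (1 - t) ^ ((1/2:ℝ) ^ (τ+1)) := by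
    funext t
    rw [Vq, if_pos (Nat.zero_le τ), Nat.sub_zero]
  have h3 : Dq N η τ 0 = DConst N η τ := by
    rw [Dq, if_pos (Nat.zero_le τ), Nat.sub_zero, DConst]
  rw [h2, h3] at h
  exact h

end BD
end
end

section
/- Let b, m > 0 and define φ(λ₁, λ₂) = sqrt(mλ₂/b) · (bλ₁ + sqrt(bmλ₂) tanh(sqrt(bmλ₂))) / (bλ₁ tanh(sqrt(bmλ₂)) + sqrt(bmλ₂)) for λ₁ ≥ 0, λ₂ > 0. Then: (i) for all λ₁ ≥ 0 and λ₂ > 0, λ₁ ∂φ/∂λ₁ + 2λ₂ ∂φ/∂λ₂ = −b φ² + φ + m λ₂; (ii) for all y > 0, λ₁ ≥ 0, λ₂ > 0, the self-similarity identity φ(λ₁ y, λ₂ y²)/y = sqrt(mλ₂/b) · (bλ₁ + sqrt(bmλ₂) tanh(y sqrt(bmλ₂))) / (bλ₁ tanh(y sqrt(bmλ₂)) + sqrt(bmλ₂)) holds. -/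
set_option maxHeartbeats 1000000

noncomputable section

/-- The scaling-limit function `φ(λ₁, λ₂)` for a two-type critical decomposable
branching process with variance parameter `b` and mean migration parameter `m`. -/
def phiBM (b m l1 l2 : ℝ) : ℝ :=
  Real.sqrt (m * l2 / b) *
      (b * l1 + Real.sqrt (b * m * l2) * Real.tanh (Real.sqrt (b * m * l2))) /
    (b * l1 * Real.tanh (Real.sqrt (b * m * l2)) + Real.sqrt (b * m * l2))

lemma myHasDerivAt_tanh (x : ℝ) :
    HasDerivAt Real.tanh (1 - Real.tanh x ^ 2) x := by
  have hc : Real.cosh x ≠ 0 := (Real.cosh_pos x).ne'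
  have h := (Real.hasDerivAt_sinh x).div (Real.hasDerivAt_cosh x) hc
  have heq : (fun y => Real.sinh y / Real.cosh y) = Real.tanh := by
    funext y; rw [Real.tanh_eq_sinh_div_cosh]
  replace h : HasDerivAt (fun y => Real.sinh y / Real.cosh y) _ x := h
  rw [heq] at h
  convert h using 1
  rw [Real.tanh_eq_sinh_div_cosh]
  have h2 := Real.cosh_sq_sub_sinh_sq x
  field_simp

lemma sqrt_aux (b m : ℝ) (hb : 0 < b) (hm : 0 < m) (v : ℝ) :
    Real.sqrt (m * v / b) = Real.sqrt (b * m * v) / b := by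
  rcases le_or_gt 0 v with hv | hv
  · rw [show m * v / b = (b * m * v) / b ^ 2 by field_simp,
      Real.sqrt_div (by positivity), Real.sqrt_sq hb.le]
  · have h1 : b * m * v ≤ 0 := mul_nonpos_of_nonneg_of_nonpos (mul_pos hb hm).le hv.le
    have h2 : m * v / b ≤ 0 :=
      div_nonpos_of_nonpos_of_nonneg (mul_nonpos_of_nonneg_of_nonpos hm.le hv.le) hb.le
    rw [Real.sqrt_eq_zero_of_nonpos h2, Real.sqrt_eq_zero_of_nonpos h1, zero_div]

lemma tanh_nonneg' {x : ℝ} (hx : 0 ≤ x) : 0 ≤ Real.tanh x := by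
  rw [Real.tanh_eq_sinh_div_cosh]
  exact div_nonneg (Real.sinh_nonneg_iff.2 hx) (Real.cosh_pos _).le

/-- `φ` satisfies the PDE
`λ₁ ∂φ/∂λ₁ + 2λ₂ ∂φ/∂λ₂ = -bφ² + φ + mλ₂` on `{λ₁ ≥ 0, λ₂ > 0}`
(one-sided in `λ₁` at `λ₁ = 0`) and the self-similarity identity. -/
theorem phi_pde_and_selfsimilarity (b m : ℝ) (hb : 0 < b) (hm : 0 < m) :
    (∀ l1 l2 : ℝ, 0 ≤ l1 → 0 < l2 →
      l1 * derivWithin (fun u : ℝ => phiBM b m u l2) (Set.Ici 0) l1 +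
          2 * l2 * deriv (fun v : ℝ => phiBM b m l1 v) l2 =
        -b * phiBM b m l1 l2 ^ 2 + phiBM b m l1 l2 + m * l2) ∧
    (∀ y l1 l2 : ℝ, 0 < y → 0 ≤ l1 → 0 < l2 →
      phiBM b m (l1 * y) (l2 * y ^ 2) / y =
        Real.sqrt (m * l2 / b) *
            (b * l1 + Real.sqrt (b * m * l2) * Real.tanh (y * Real.sqrt (b * m * l2))) /
          (b * l1 * Real.tanh (y * Real.sqrt (b * m * l2)) + Real.sqrt (b * m * l2))) := by
  constructor
  · intro l1 l2 hl1 hl2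
    have hbm : (0:ℝ) < b * m * l2 := by positivity
    have hs : 0 < Real.sqrt (b * m * l2) := Real.sqrt_pos.2 hbm
    have ht0 : 0 ≤ Real.tanh (Real.sqrt (b * m * l2)) := tanh_nonneg' hs.le
    have hD : 0 < b * l1 * Real.tanh (Real.sqrt (b * m * l2)) + Real.sqrt (b * m * l2) := by
      have : 0 ≤ b * l1 * Real.tanh (Real.sqrt (b * m * l2)) :=
        mul_nonneg (mul_nonneg hb.le hl1) ht0
      linarith
    have hc' : Real.sqrt (m * l2 / b) = Real.sqrt (b * m * l2) / b := sqrt_aux b m hb hm l2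
    -- derivative in l1
    have hfun1 : (fun u : ℝ => phiBM b m u l2) =
        (fun u : ℝ => Real.sqrt (m * l2 / b) *
            (b * u + Real.sqrt (b * m * l2) * Real.tanh (Real.sqrt (b * m * l2))) /
          (b * u * Real.tanh (Real.sqrt (b * m * l2)) + Real.sqrt (b * m * l2))) := rfl
    have hnum1 : HasDerivAt (fun u : ℝ => Real.sqrt (m * l2 / b) *
        (b * u + Real.sqrt (b * m * l2) * Real.tanh (Real.sqrt (b * m * l2))))
        (Real.sqrt (m * l2 / b) * b) l1 := by
      have h1 : HasDerivAt (fun u : ℝ => b * u +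
          Real.sqrt (b * m * l2) * Real.tanh (Real.sqrt (b * m * l2))) b l1 := by
        simpa using ((hasDerivAt_id l1).const_mul b).add_const
          (Real.sqrt (b * m * l2) * Real.tanh (Real.sqrt (b * m * l2)))
      simpa [mul_comm] using h1.const_mul (Real.sqrt (m * l2 / b))
    have hden1 : HasDerivAt (fun u : ℝ => b * u * Real.tanh (Real.sqrt (b * m * l2)) +
        Real.sqrt (b * m * l2)) (b * Real.tanh (Real.sqrt (b * m * l2))) l1 := by
      simpa using (((hasDerivAt_id l1).const_mul b).mul_const
        (Real.tanh (Real.sqrt (b * m * l2)))).add_const (Real.sqrt (b * m * l2))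
    have hd1 := hnum1.div hden1 hD.ne'
    have hd1' := hd1.hasDerivWithinAt.derivWithin (uniqueDiffOn_Ici 0 l1 (Set.mem_Ici.2 hl1))
    -- derivative in l2
    have hS : HasDerivAt (fun v : ℝ => Real.sqrt (b * m * v))
        (b * m / (2 * Real.sqrt (b * m * l2))) l2 := by
      have h0 : HasDerivAt (fun v : ℝ => b * m * v) (b * m) l2 := by
        simpa using (hasDerivAt_id l2).const_mul (b * m)
      have := (Real.hasDerivAt_sqrt hbm.ne').comp l2 h0
      rw [show b * m / (2 * Real.sqrt (b * m * l2)) = 1 / (2 * Real.sqrt (b * m * l2)) * (b * m) by ring]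
      exact this
    have hT : HasDerivAt (fun v : ℝ => Real.tanh (Real.sqrt (b * m * v)))
        ((1 - Real.tanh (Real.sqrt (b * m * l2)) ^ 2) * (b * m / (2 * Real.sqrt (b * m * l2))))
        l2 := by
      have := (myHasDerivAt_tanh (Real.sqrt (b * m * l2))).comp l2 hS
      exact this
    have hC : HasDerivAt (fun v : ℝ => Real.sqrt (m * v / b))
        (b * m / (2 * Real.sqrt (b * m * l2)) / b) l2 := by
      have heq : (fun v : ℝ => Real.sqrt (m * v / b)) =
          fun v => Real.sqrt (b * m * v) / b := by
        funext v; exact sqrt_aux b m hb hm v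
      rw [heq]; exact hS.div_const b
    have hd2 := (hC.mul ((hS.mul hT).const_add (b * l1))).div
      ((hT.const_mul (b * l1)).add hS) hD.ne'
    have hfun2 : (fun v : ℝ => phiBM b m l1 v) =
        (fun v : ℝ => Real.sqrt (m * v / b) *
            (b * l1 + Real.sqrt (b * m * v) * Real.tanh (Real.sqrt (b * m * v))) /
          (b * l1 * Real.tanh (Real.sqrt (b * m * v)) + Real.sqrt (b * m * v))) := rfl
    rw [hfun1, hfun2]
    erw [hd1', hd2.deriv]
    simp only [Pi.mul_apply, Pi.add_apply]
    show _ = -b * phiBM b m l1 l2 ^ 2 + phiBM b m l1 l2 + m * l2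
    rw [show phiBM b m l1 l2 = Real.sqrt (m * l2 / b) *
            (b * l1 + Real.sqrt (b * m * l2) * Real.tanh (Real.sqrt (b * m * l2))) /
          (b * l1 * Real.tanh (Real.sqrt (b * m * l2)) + Real.sqrt (b * m * l2)) from rfl]
    rw [hc']
    set s := Real.sqrt (b * m * l2) with hsdef
    set t := Real.tanh s with htdef
    have hs2 : s ^ 2 = b * m * l2 := Real.sq_sqrt hbm.le
    have hl2' : l2 = s ^ 2 / (b * m) := by field_simp [hs2]; linarith
    rw [hl2']
    field_simp
    ring
  · intro y l1 l2 hy hl1 hl2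
    have hbm : (0:ℝ) < b * m * l2 := by positivity
    have hs : 0 < Real.sqrt (b * m * l2) := Real.sqrt_pos.2 hbm
    have h1 : Real.sqrt (b * m * (l2 * y ^ 2)) = y * Real.sqrt (b * m * l2) := by
      rw [show b * m * (l2 * y ^ 2) = (b * m * l2) * y ^ 2 by ring,
        Real.sqrt_mul hbm.le, Real.sqrt_sq hy.le]
      ring
    have h2 : Real.sqrt (m * (l2 * y ^ 2) / b) = y * Real.sqrt (m * l2 / b) := by
      rw [sqrt_aux b m hb hm, sqrt_aux b m hb hm, h1]; ring
    have ht0 : 0 ≤ Real.tanh (y * Real.sqrt (b * m * l2)) := tanh_nonneg' (by positivity)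
    have hden : 0 < b * l1 * Real.tanh (y * Real.sqrt (b * m * l2)) + Real.sqrt (b * m * l2) := by
      have : 0 ≤ b * l1 * Real.tanh (y * Real.sqrt (b * m * l2)) :=
        mul_nonneg (mul_nonneg hb.le hl1) ht0
      linarith
    rw [show phiBM b m (l1 * y) (l2 * y ^ 2) = Real.sqrt (m * (l2 * y ^ 2) / b) *
        (b * (l1 * y) + Real.sqrt (b * m * (l2 * y ^ 2)) *
          Real.tanh (Real.sqrt (b * m * (l2 * y ^ 2)))) /
        (b * (l1 * y) * Real.tanh (Real.sqrt (b * m * (l2 * y ^ 2))) +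
          Real.sqrt (b * m * (l2 * y ^ 2))) from rfl]
    rw [h1, h2]
    rw [show b * (l1 * y) * Real.tanh (y * Real.sqrt (b * m * l2)) + y * Real.sqrt (b * m * l2)
        = y * (b * l1 * Real.tanh (y * Real.sqrt (b * m * l2)) + Real.sqrt (b * m * l2)) by ring]
    rw [div_div, div_eq_div_iff (by positivity) hden.ne']
    ring

end
end
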